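/- arXiv:1606.09081 — 7 statements merged into one kernel-verified Lean document; each statement's English description precedes it below -/
import Mathlib

section
/- If A is an n×n skew-symmetric matrix (over the reals) and X is an HL-clan of A, then A and Inv(X,A) have the same characteristic polynomial. -/
open Matrix

def MInv {m : Type*} [DecidableEq m] (X : Finset m) (A : Matrix m m ℝ) : Matrix m m ℝ :=
  fun i j => if i ∈ X ∧ j ∈ X then -A i j else A i j

def oSub {m : Type*} (A : Matrix m m ℝ) (X Y : Finset m) : Matrix X Y ℝ :=
  A.submatrix (fun i => (i : m)) (fun j => (j : m))

def pSub {m : Type*} (A : Matrix m m ℝ) (X : Finset m) : Matrix X X ℝ :=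
  A.submatrix (fun i => (i : m)) (fun j => (j : m))

def IsHLClan {m : Type*} [Fintype m] [DecidableEq m] (A : Matrix m m ℝ) (X : Finset m) : Prop :=
  (oSub A X Xᶜ).rank ≤ 1 ∧ (oSub A Xᶜ X).rank ≤ 1

def HLCRE {m : Type*} [Fintype m] [DecidableEq m] (A B : Matrix m m ℝ) : Prop :=
  ∃ N : ℕ, ∃ f : ℕ → Matrix m m ℝ, f 0 = A ∧ f N = B ∧
    (∀ k ≤ N, (f k)ᵀ = -(f k)) ∧
    (∀ k < N, ∃ X : Finset m, IsHLClan (f k) X ∧ f (k + 1) = MInv X (f k))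

open Polynomial in
lemma eval_charpoly' {m : Type*} [Fintype m] [DecidableEq m] (M : Matrix m m ℝ) (t : ℝ) :
    M.charpoly.eval t = (t • (1 : Matrix m m ℝ) - M).det := by
  rw [Matrix.charpoly, ← Polynomial.coe_evalRingHom, RingHom.map_det]
  congr 1
  ext i j
  by_cases h : i = j
  · subst h
    simp [charmatrix_apply_eq, Matrix.one_apply]
  · simp [charmatrix_apply_ne _ _ _ h, Matrix.one_apply, h]

lemma rank_le_one_decomp {ι κ : Type*} [Fintype ι] [Fintype κ] [DecidableEq κ]
    (C : Matrix ι κ ℝ) (h : C.rank ≤ 1) :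
    ∃ u : ι → ℝ, ∃ v : κ → ℝ, ∀ i j, C i j = u i * v j := by
  rw [Matrix.rank] at h
  obtain ⟨w, hw⟩ := finrank_le_one_iff.mp h
  have hmem : ∀ j, Cᵀ j ∈ LinearMap.range C.mulVecLin := fun j =>
    LinearMap.mem_range.mpr ⟨Pi.single j 1, by
      rw [Matrix.mulVecLin_apply, Matrix.mulVec_single_one]; rfl⟩
  refine ⟨fun i => (w : ι → ℝ) i,
    fun j => Classical.choose (hw ⟨Cᵀ j, hmem j⟩), fun i j => ?_⟩
  have hc := Classical.choose_spec (hw ⟨Cᵀ j, hmem j⟩)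
  have h2 := congrArg (fun z : LinearMap.range C.mulVecLin => (z : ι → ℝ) i) hc
  simp only [SetLike.val_smul, Pi.smul_apply, smul_eq_mul, Matrix.transpose_apply] at h2
  rw [← h2]
  ring

lemma block_det_eq {ι κ : Type*} [Fintype ι] [Fintype κ] [DecidableEq ι] [DecidableEq κ]
    (B : Matrix ι ι ℝ) (C : Matrix ι κ ℝ) (E : Matrix κ κ ℝ)
    (hB : Bᵀ = -B) (u : ι → ℝ) (v : κ → ℝ) (huv : ∀ i j, C i j = u i * v j)
    (t : ℝ) (ht : IsUnit (t • (1 : Matrix κ κ ℝ) - E).det) :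
    (fromBlocks (t • 1 + B) (-C) (Cᵀ) (t • 1 - E)).det
      = (fromBlocks (t • 1 - B) (-C) (Cᵀ) (t • 1 - E)).det := by
  haveI := (t • (1 : Matrix κ κ ℝ) - E).invertibleOfIsUnitDet ht
  set W := ⅟(t • (1 : Matrix κ κ ℝ) - E) with hW
  rw [Matrix.det_fromBlocks₂₂, Matrix.det_fromBlocks₂₂]
  congr 1
  have key : ∀ i j, (C * W * Cᵀ) i j
      = u i * u j * (∑ l, (∑ k, v k * W k l) * v l) := by
    intro i j
    simp only [Matrix.mul_apply, Matrix.transpose_apply, huv]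
    rw [Finset.mul_sum]
    refine Finset.sum_congr rfl fun l _ => ?_
    have h1 : (∑ k, v k * W k l) * v l = ∑ k, v k * W k l * v l := Finset.sum_mul _ _ _
    rw [h1, Finset.mul_sum, Finset.sum_mul]
    refine Finset.sum_congr rfl fun k _ => ?_
    ring
  have hS : (C * W * Cᵀ)ᵀ = C * W * Cᵀ := by
    ext i j
    rw [Matrix.transpose_apply, key, key]
    ring
  have h1 : (t • 1 + B) - (-C) * W * Cᵀ = t • 1 + B + C * W * Cᵀ := by
    rw [Matrix.neg_mul, Matrix.neg_mul, sub_neg_eq_add]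
  have h2 : (t • 1 - B) - (-C) * W * Cᵀ = t • 1 - B + C * W * Cᵀ := by
    rw [Matrix.neg_mul, Matrix.neg_mul, sub_neg_eq_add]
  rw [h1, h2, ← Matrix.det_transpose (t • 1 + B + C * W * Cᵀ)]
  congr 1
  rw [Matrix.transpose_add, Matrix.transpose_add, hB, hS, Matrix.transpose_smul,
    Matrix.transpose_one, sub_eq_add_neg]

theorem stmt_5 {n : ℕ} (A : Matrix (Fin n) (Fin n) ℝ) (hA : Aᵀ = -A)
    (X : Finset (Fin n)) (hX : IsHLClan A X) :
    (MInv X A).charpoly = A.charpoly := by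
  classical
  have hAe : ∀ i j, A j i = -A i j := fun i j => by
    have := congrFun (congrFun hA i) j
    simpa using this
  let e : (↥X ⊕ ↥(Xᶜ)) ≃ Fin n :=
    (Equiv.sumCongr (Equiv.refl ↥X)
      (Equiv.subtypeEquivRight (fun x => Finset.mem_compl))).trans
      (Equiv.sumCompl (· ∈ X))
  have he1 : ∀ i : ↥X, e (Sum.inl i) = ↑i := fun i => rfl
  have he2 : ∀ j : ↥(Xᶜ), e (Sum.inr j) = ↑j := fun j => rfl
  have hmem : ∀ i : ↥X, (↑i : Fin n) ∈ X := fun i => i.2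
  have hmemc : ∀ j : ↥(Xᶜ), (↑j : Fin n) ∉ X := fun j => Finset.mem_compl.mp j.2
  have hne : ∀ (i : ↥X) (j : ↥(Xᶜ)), (↑i : Fin n) ≠ ↑j := fun i j h =>
    hmemc j (h ▸ hmem i)
  set B := pSub A X with hBdef
  set C := oSub A X Xᶜ with hCdef
  set E := pSub A Xᶜ with hEdef
  have hBskew : Bᵀ = -B := by
    ext i j
    show A ↑j ↑i = -(A ↑i ↑j)
    exact hAe _ _
  obtain ⟨u, v, huv⟩ := rank_le_one_decomp C hX.1
  apply Polynomial.eq_of_infinite_eval_eq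
  have hfin : {t : ℝ | E.charpoly.eval t = 0}.Finite :=
    Polynomial.finite_setOf_isRoot (Matrix.charpoly_monic E).ne_zero
  have hinf : {t : ℝ | E.charpoly.eval t ≠ 0}.Infinite := by
    have := hfin.infinite_compl
    simpa [Set.compl_setOf] using this
  refine hinf.mono fun t ht => ?_
  simp only [Set.mem_setOf_eq] at ht ⊢
  rw [eval_charpoly'] at ht
  have htu : IsUnit (t • (1 : Matrix ↥(Xᶜ) ↥(Xᶜ) ℝ) - E).det := isUnit_iff_ne_zero.mpr ht
  have hsubA : (t • 1 - A).submatrix e e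
      = fromBlocks (t • 1 - B) (-C) (Cᵀ) (t • 1 - E) := by
    ext i j
    cases i with
    | inl i =>
      cases j with
      | inl j =>
        simp [he1, hBdef, pSub, Matrix.one_apply, Subtype.coe_inj]
      | inr j =>
        simp [he1, he2, hCdef, oSub, Matrix.one_apply, hne i j]
    | inr i =>
      cases j with
      | inl j =>
        simp only [Matrix.submatrix_apply, he1, he2, Matrix.fromBlocks_apply₂₁,
          Matrix.sub_apply, Matrix.smul_apply, Matrix.one_apply, hCdef, oSub,
          Matrix.transpose_apply, if_neg (hne j i).symm, smul_eq_mul, mul_zero, zero_sub]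
        exact (hAe _ _).symm
      | inr j =>
        simp [he2, hEdef, pSub, Matrix.one_apply, Subtype.coe_inj]
  have hsubM : (t • 1 - MInv X A).submatrix e e
      = fromBlocks (t • 1 + B) (-C) (Cᵀ) (t • 1 - E) := by
    ext i j
    cases i with
    | inl i =>
      cases j with
      | inl j =>
        simp [he1, hBdef, pSub, MInv, Matrix.one_apply, Subtype.coe_inj,
          hmem i, hmem j, sub_neg_eq_add]
      | inr j =>
        simp [he1, he2, hCdef, oSub, MInv, Matrix.one_apply, hne i j, hmemc j]
    | inr i =>
      cases j with
      | inl j =>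
        simp only [Matrix.submatrix_apply, he1, he2, Matrix.fromBlocks_apply₂₁,
          Matrix.sub_apply, Matrix.smul_apply, Matrix.one_apply, hCdef, oSub, MInv,
          Matrix.transpose_apply, if_neg (hne j i).symm, smul_eq_mul, mul_zero, zero_sub,
          hmemc i, false_and, if_false]
        exact (hAe _ _).symm
      | inr j =>
        simp [he2, hEdef, pSub, MInv, Matrix.one_apply, Subtype.coe_inj, hmemc i]
  rw [eval_charpoly', eval_charpoly',
    ← Matrix.det_submatrix_equiv_self e (t • 1 - MInv X A),
    ← Matrix.det_submatrix_equiv_self e (t • 1 - A), hsubA, hsubM]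
  exact block_det_eq B C E hBskew u v huv t htu
end

section
/- If A is an n×n skew-symmetric matrix and X is an HL-clan of A, then det(Inv(X,A)) = det(A). -/
open Matrix

section Helpers

variable {m : Type*} [Fintype m] [DecidableEq m]

lemma skew_dot {A : Matrix m m ℝ} (hA : Aᵀ = -A) (x y : m → ℝ) :
    (A *ᵥ x) ⬝ᵥ y = -(x ⬝ᵥ (A *ᵥ y)) := by
  have h2 : y ⬝ᵥ A *ᵥ x = y ᵥ* A ⬝ᵥ x := dotProduct_mulVec y A x
  have h3 : y ᵥ* A = Aᵀ *ᵥ y := by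
    rw [← vecMul_transpose, transpose_transpose]
  rw [dotProduct_comm, h2, h3, hA, neg_mulVec, neg_dotProduct, dotProduct_comm]

lemma skew_dot_self {A : Matrix m m ℝ} (hA : Aᵀ = -A) (x : m → ℝ) :
    (A *ᵥ x) ⬝ᵥ x = 0 := by
  have h1 := skew_dot hA x x
  rw [dotProduct_comm] at h1
  rw [dotProduct_comm]
  linarith

lemma det_MInv_aux {A : Matrix m m ℝ} {X : Finset m} {w z : m → ℝ}
    (hw : ∀ i ∉ X, w i = 0) (hz : ∀ j ∈ X, z j = 0)
    (hblk : ∀ i ∈ X, ∀ j ∉ X, A i j = w i * z j) (hU : IsUnit A.det) :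
    (MInv X A).det = (-1 : ℝ)^X.card * A.det * (1 - 2 * (z ⬝ᵥ (A⁻¹ *ᵥ w))) := by
  classical
  set d : m → ℝ := fun i => if i ∈ X then -1 else 1 with hd
  set D : Matrix m m ℝ := diagonal d with hD
  have hdd : d * d = 1 := by
    funext i
    by_cases h : i ∈ X <;> simp [hd, h]
  have hdd1 : (fun i => d i * d i) = fun _ => (1 : ℝ) := by
    funext i
    by_cases h : i ∈ X <;> simp [hd, h]
  have hDD : D * D = 1 := by
    rw [hD, diagonal_mul_diagonal, hdd1, diagonal_one]
  have hdetD : D.det = (-1 : ℝ)^X.card := by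
    rw [hD, det_diagonal, ← Finset.prod_mul_prod_compl X]
    have h1 : ∏ i ∈ X, d i = (-1 : ℝ)^X.card := by
      rw [Finset.prod_congr rfl (fun i hi => show d i = (-1 : ℝ) by simp [hd, hi]),
        Finset.prod_const]
    have h2 : ∏ i ∈ Xᶜ, d i = 1 := by
      apply Finset.prod_eq_one
      intro i hi
      simp only [Finset.mem_compl] at hi
      simp [hd, hi]
    rw [h1, h2, mul_one]
  have hkey : MInv X A = D * A + (replicateCol Unit ((2 : ℝ) • w) * replicateRow Unit z : Matrix m m ℝ) := by
    ext i j
    rw [Matrix.add_apply]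
    have hDA : (D * A) i j = d i * A i j := by rw [hD, diagonal_mul]
    have hcr : ((replicateCol Unit ((2 : ℝ) • w) * replicateRow Unit z : Matrix m m ℝ)) i j = 2 * (w i * z j) := by
      rw [Matrix.mul_apply]
      simp [Matrix.replicateCol_apply, Matrix.replicateRow_apply]
      ring
    rw [hDA, hcr]
    show (if i ∈ X ∧ j ∈ X then -A i j else A i j) = _
    by_cases hi : i ∈ X <;> by_cases hj : j ∈ X
    · rw [if_pos ⟨hi, hj⟩, hz j hj]; simp [hd, hi]
    · rw [if_neg (by tauto), hblk i hi j hj]; simp [hd, hi]; ring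
    · rw [if_neg (by tauto), hw i hi]; simp [hd, hi]
    · rw [if_neg (by tauto), hw i hi]; simp [hd, hi]
  have hDdet : IsUnit (D * A).det := by
    rw [det_mul, hdetD]
    exact (isUnit_iff_ne_zero.mpr (pow_ne_zero _ (by norm_num))).mul hU
  have hDinv : (D * A)⁻¹ = A⁻¹ * D := by
    rw [Matrix.mul_inv_rev, inv_eq_right_inv hDD]
  have hDw : (D * A)⁻¹ *ᵥ (((2 : ℝ) • w)) = ((-2 : ℝ) • (A⁻¹ *ᵥ w) : m → ℝ) := by
    rw [hDinv, ← mulVec_mulVec]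
    have : D *ᵥ (((2 : ℝ) • w)) = (-2 : ℝ) • w := by
      funext i
      by_cases h : i ∈ X
      · simp [hD, mulVec_diagonal, hd, h]
      · simp [hD, mulVec_diagonal, hd, h, hw i h]
    rw [this, mulVec_smul]
  rw [hkey, det_add_replicateCol_mul_replicateRow hDdet, det_mul, hdetD]
  have hsc : (1 + replicateRow Unit z * (D * A)⁻¹ * replicateCol Unit (((2 : ℝ) • w))).det
      = 1 - 2 * (z ⬝ᵥ (A⁻¹ *ᵥ w)) := by
    rw [Matrix.mul_assoc, ← replicateCol_mulVec, hDw]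
    rw [det_unique, Matrix.add_apply, Matrix.one_apply_eq, replicateRow_mul_replicateCol_apply]
    rw [dotProduct_smul]
    simp [smul_eq_mul]
    ring
  rw [hsc]

end Helpers

section Core

variable {m : Type*} [Fintype m] [DecidableEq m]

lemma sum_split {X : Finset m} (f : m → ℝ) :
    ∑ j, f j = (∑ j ∈ X, f j) + ∑ j ∈ Xᶜ, f j := by
  rw [Finset.sum_add_sum_compl]

lemma dot_restrict {X : Finset m} {w : m → ℝ} (hw : ∀ i ∉ X, w i = 0) (p : m → ℝ) :
    w ⬝ᵥ p = ∑ i ∈ X, w i * p i := by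
  rw [dotProduct, sum_split (X := X) (fun i => w i * p i)]
  have : ∑ i ∈ Xᶜ, w i * p i = 0 := by
    apply Finset.sum_eq_zero
    intro i hi
    rw [hw i (Finset.mem_compl.mp hi), zero_mul]
  rw [this, add_zero]

lemma row_eq {A : Matrix m m ℝ} {X : Finset m} {w z : m → ℝ}
    (hz : ∀ j ∈ X, z j = 0)
    (hblk : ∀ i ∈ X, ∀ j ∉ X, A i j = w i * z j) (x : m → ℝ) {i : m} (hi : i ∈ X) :
    (A *ᵥ x) i = (∑ j ∈ X, A i j * x j) + w i * (z ⬝ᵥ x) := by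
  rw [mulVec, dotProduct, sum_split (X := X) (fun j => A i j * x j)]
  congr 1
  rw [dot_restrict (X := Xᶜ) (fun j hj => hz j (by simpa using hj)) x, Finset.mul_sum]
  apply Finset.sum_congr rfl
  intro j hj
  rw [hblk i hi j (Finset.mem_compl.mp hj)]
  ring

lemma det_MInv_even {A : Matrix m m ℝ} {X : Finset m} {w z : m → ℝ} (hA : Aᵀ = -A)
    (hw : ∀ i ∉ X, w i = 0) (hz : ∀ j ∈ X, z j = 0)
    (hblk : ∀ i ∈ X, ∀ j ∉ X, A i j = w i * z j) (hU : IsUnit A.det)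
    (hP : IsUnit (pSub A X).det) :
    (MInv X A).det = A.det := by
  classical
  set x : m → ℝ := A⁻¹ *ᵥ w with hx
  set y : m → ℝ := A⁻¹ *ᵥ z with hy
  have hAx : A *ᵥ x = w := by
    rw [hx, mulVec_mulVec, Matrix.mul_nonsing_inv A hU, one_mulVec]
  have hAy : A *ᵥ y = z := by
    rw [hy, mulVec_mulVec, Matrix.mul_nonsing_inv A hU, one_mulVec]
  have hzy : z ⬝ᵥ y = 0 := by
    have := skew_dot_self hA y
    rwa [hAy] at this
  -- y vanishes on X
  have hyX : ∀ j ∈ X, y j = 0 := by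
    have hrow : ∀ i ∈ X, ∑ j ∈ X, A i j * y j = 0 := by
      intro i hi
      have h1 : (A *ᵥ y) i = 0 := by rw [hAy]; exact hz i hi
      rw [row_eq hz hblk y hi, hzy, mul_zero, add_zero] at h1
      exact h1
    set y' : X → ℝ := fun j => y (j : m) with hy'
    have hPy : pSub A X *ᵥ y' = 0 := by
      funext i
      show ∑ j : X, pSub A X i j * y' j = 0
      rw [show ∑ j : X, pSub A X i j * y' j = ∑ j ∈ X, A (i : m) j * y j from
        Finset.sum_coe_sort X (fun j => A (i : m) j * y j)]
      exact hrow (i : m) i.2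
    have : y' = 0 := by
      have h2 : (pSub A X)⁻¹ *ᵥ (pSub A X *ᵥ y') = y' := by
        rw [mulVec_mulVec, Matrix.nonsing_inv_mul _ hP, one_mulVec]
      rw [hPy, mulVec_zero] at h2
      exact h2.symm
    intro j hj
    exact congrFun this ⟨j, hj⟩
  have hc : z ⬝ᵥ x = 0 := by
    have h1 : z ⬝ᵥ x = -(y ⬝ᵥ (A *ᵥ x)) := by
      rw [← hAy]; exact skew_dot hA y x
    rw [hAx] at h1
    have h2 : y ⬝ᵥ w = 0 := by
      rw [dotProduct]
      apply Finset.sum_eq_zero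
      intro i _
      by_cases h : i ∈ X
      · rw [hyX i h, zero_mul]
      · rw [hw i h, mul_zero]
    rw [h1, h2, neg_zero]
  -- parity
  have hpar : (-1 : ℝ)^X.card = 1 := by
    have hskew : (pSub A X)ᵀ = -(pSub A X) := by
      ext i j
      show A (j : m) (i : m) = -A (i : m) (j : m)
      have h := congrFun (congrFun hA (i : m)) (j : m)
      simp only [transpose_apply, Pi.neg_apply, Matrix.neg_apply] at h
      linarith
    have h1 : (pSub A X).det = (-1 : ℝ)^X.card * (pSub A X).det := by
      conv_lhs => rw [← Matrix.det_transpose, hskew, Matrix.det_neg, Fintype.card_coe]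
    have h2 := hP.ne_zero
    by_contra hne
    have h3 : Odd X.card := by
      rcases Nat.even_or_odd X.card with he | ho
      · exact absurd (Even.neg_one_pow he) hne
      · exact ho
    rw [Odd.neg_one_pow h3] at h1
    apply h2
    linarith
  rw [det_MInv_aux hw hz hblk hU, ← hx, hc, hpar]
  ring

lemma det_MInv_odd {A : Matrix m m ℝ} {X : Finset m} {w z : m → ℝ} (hA : Aᵀ = -A)
    (hw : ∀ i ∉ X, w i = 0) (hz : ∀ j ∈ X, z j = 0)
    (hblk : ∀ i ∈ X, ∀ j ∉ X, A i j = w i * z j) (hU : IsUnit A.det)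
    (hodd : Odd X.card) (p : m → ℝ)
    (hpker : ∀ j ∈ X, ∑ i ∈ X, A i j * p i = 0)
    (hpw : w ⬝ᵥ p ≠ 0) :
    (MInv X A).det = A.det := by
  classical
  set x : m → ℝ := A⁻¹ *ᵥ w with hx
  have hAx : A *ᵥ x = w := by
    rw [hx, mulVec_mulVec, Matrix.mul_nonsing_inv A hU, one_mulVec]
  set c : ℝ := z ⬝ᵥ x with hc
  have hrow : ∀ i ∈ X, ∑ j ∈ X, A i j * x j = (1 - c) * w i := by
    intro i hi
    have h1 : (A *ᵥ x) i = w i := by rw [hAx]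
    rw [row_eq hz hblk x hi, ← hc] at h1
    linarith [h1]
  have hkey : (1 - c) * (w ⬝ᵥ p) = 0 := by
    have h1 : ∑ i ∈ X, p i * ((1 - c) * w i) = (1 - c) * (w ⬝ᵥ p) := by
      rw [dot_restrict hw p, Finset.mul_sum]
      apply Finset.sum_congr rfl
      intro i _
      ring
    rw [← h1]
    have h2 : ∑ i ∈ X, p i * ((1 - c) * w i) = ∑ i ∈ X, p i * ∑ j ∈ X, A i j * x j := by
      apply Finset.sum_congr rfl
      intro i hi
      rw [hrow i hi]
    rw [h2]
    have h3 : ∑ i ∈ X, p i * ∑ j ∈ X, A i j * x j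
        = ∑ j ∈ X, (∑ i ∈ X, A i j * p i) * x j := by
      simp only [Finset.mul_sum, Finset.sum_mul]
      rw [Finset.sum_comm]
      exact Finset.sum_congr rfl fun j _ => Finset.sum_congr rfl fun i _ => by ring
    rw [h3]
    apply Finset.sum_eq_zero
    intro j hj
    rw [hpker j hj, zero_mul]
  have hc1 : c = 1 := by
    rcases mul_eq_zero.mp hkey with h | h
    · linarith
    · exact absurd h hpw
  rw [det_MInv_aux hw hz hblk hU, ← hx, ← hc, hc1, Odd.neg_one_pow hodd]
  ring

end Core

section Bridge

variable {m : Type*} [Fintype m] [DecidableEq m]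

lemma pSub_skew {A : Matrix m m ℝ} {X : Finset m} (hA : Aᵀ = -A) :
    (pSub A X)ᵀ = -(pSub A X) := by
  ext i j
  show A (j : m) (i : m) = -A (i : m) (j : m)
  have h := congrFun (congrFun hA (i : m)) (j : m)
  simp only [transpose_apply, Matrix.neg_apply] at h
  linarith

lemma skew_det_zero_of_odd {A : Matrix m m ℝ} (hA : Aᵀ = -A)
    (h : Odd (Fintype.card m)) : A.det = 0 := by
  have h1 : A.det = (-1 : ℝ)^(Fintype.card m) * A.det := by
    conv_lhs => rw [← Matrix.det_transpose, hA, Matrix.det_neg]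
  rw [Odd.neg_one_pow h] at h1
  linarith

lemma MInv_skew {A : Matrix m m ℝ} {X : Finset m} (hA : Aᵀ = -A) :
    (MInv X A)ᵀ = -(MInv X A) := by
  ext i j
  have h := congrFun (congrFun hA (i : m)) (j : m)
  simp only [transpose_apply, Matrix.neg_apply] at h
  show MInv X A j i = -(MInv X A i j)
  unfold MInv
  by_cases hi : i ∈ X <;> by_cases hj : j ∈ X <;>
    simp [hi, hj] <;> linarith

lemma odd_from_adj {A : Matrix m m ℝ} {X : Finset m} {w : m → ℝ} (hA : Aᵀ = -A)
    (hw : ∀ i ∉ X, w i = 0)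
    (hq : (fun i : X => w (i : m)) ⬝ᵥ (adjugate (pSub A X) *ᵥ (fun i : X => w (i : m))) ≠ 0) :
    Odd X.card ∧ ∃ p : m → ℝ, (∀ j ∈ X, ∑ i ∈ X, A i j * p i = 0) ∧ w ⬝ᵥ p ≠ 0 := by
  classical
  set P : Matrix X X ℝ := pSub A X with hP
  set w' : X → ℝ := fun i => w (i : m) with hw'
  have hskew : Pᵀ = -P := pSub_skew hA
  have hcard : Fintype.card X = X.card := Fintype.card_coe X
  have hodd : Odd X.card := by
    by_contra hne
    have heven : Even X.card := Nat.not_odd_iff_even.mp hne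
    have hne0 : X.card ≠ 0 := by
      intro h0
      apply hq
      have : IsEmpty (X : Type _) := by
        rw [← Fintype.card_eq_zero_iff, hcard, h0]
      simp [dotProduct, Finset.univ_eq_empty]
    have hadj : (adjugate P)ᵀ = -(adjugate P) := by
      rw [adjugate_transpose, hskew, ← neg_one_smul ℝ P, adjugate_smul, hcard]
      have : (-1 : ℝ)^(X.card - 1) = -1 := by
        apply Odd.neg_one_pow
        exact Nat.Even.sub_odd (Nat.one_le_iff_ne_zero.mpr hne0) heven odd_one
      rw [this, neg_one_smul]
    apply hq
    have := skew_dot_self hadj w'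
    rwa [dotProduct_comm] at this
  have hdet : P.det = 0 := by
    apply skew_det_zero_of_odd hskew
    rwa [hcard]
  set p' : X → ℝ := adjugate P *ᵥ w' with hp'
  have hPp : P *ᵥ p' = 0 := by
    rw [hp', mulVec_mulVec, mul_adjugate, hdet, zero_smul, zero_mulVec]
  refine ⟨hodd, fun i => if h : i ∈ X then p' ⟨i, h⟩ else 0, ?_, ?_⟩
  · intro j hj
    have h1 : ∑ i ∈ X, A i j * (if h : i ∈ X then p' ⟨i, h⟩ else 0)
        = ∑ i : X, A (i : m) j * p' i := by
      rw [← Finset.sum_coe_sort X (fun i => A i j * (if h : i ∈ X then p' ⟨i, h⟩ else 0))]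
      apply Finset.sum_congr rfl
      intro i _
      rw [dif_pos i.2]
    rw [h1]
    have h2 : ∑ i : X, A (i : m) j * p' i = -((P *ᵥ p') ⟨j, hj⟩) := by
      rw [show (P *ᵥ p') ⟨j, hj⟩ = ∑ i : X, P ⟨j, hj⟩ i * p' i from rfl, ← Finset.sum_neg_distrib]
      apply Finset.sum_congr rfl
      intro i _
      have h := congrFun (congrFun hA (i : m)) j
      simp only [transpose_apply, Matrix.neg_apply] at h
      show A (i : m) j * p' i = -(A j (i : m) * p' i)
      rw [h]
      ring
    rw [h2, hPp]
    show -(0 : {x // x ∈ X} → ℝ) ⟨j, hj⟩ = 0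
    simp
  · rw [dot_restrict hw]
    have h3 : ∑ i ∈ X, w i * (if h : i ∈ X then p' ⟨i, h⟩ else 0) = w' ⬝ᵥ p' := by
      rw [dotProduct, ← Finset.sum_coe_sort X
        (fun i => w i * (if h : i ∈ X then p' ⟨i, h⟩ else 0))]
      apply Finset.sum_congr rfl
      intro i _
      rw [dif_pos i.2]
    rw [h3]
    exact hq

lemma rank_factor {α β : Type*} [Fintype α] [Fintype β] [DecidableEq β] (M : Matrix α β ℝ)
    (h : M.rank ≤ 1) : ∃ (u : α → ℝ) (v : β → ℝ), ∀ i j, M i j = u i * v j := by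
  have h' : Module.finrank ℝ ↥(LinearMap.range M.mulVecLin) ≤ 1 := h
  obtain ⟨v₀, hv₀⟩ := finrank_le_one_iff.mp h'
  choose c hc using hv₀
  have hmem : ∀ j : β, M *ᵥ Pi.single j 1 ∈ LinearMap.range M.mulVecLin := by
    intro j
    exact ⟨Pi.single j 1, rfl⟩
  refine ⟨fun i => (v₀ : α → ℝ) i,
    fun j => c ⟨M *ᵥ Pi.single j 1, hmem j⟩, fun i j => ?_⟩
  have h1 := hc ⟨M *ᵥ Pi.single j 1, hmem j⟩
  have h2 := congrFun (congrArg (Subtype.val) h1) i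
  simp only [SetLike.val_smul, Pi.smul_apply, smul_eq_mul] at h2
  show M i j = (v₀ : α → ℝ) i * c ⟨M *ᵥ Pi.single j 1, hmem j⟩
  have h3 : (M *ᵥ Pi.single j 1) i = M i j := by simp [mulVec_single]
  rw [← h3, ← h2]
  ring

end Bridge

section Witness

variable {m : Type*} [Fintype m] [DecidableEq m]

lemma exists_involution (α : Type*) [Fintype α] [DecidableEq α]
    (h : Even (Fintype.card α)) :
    ∃ σ : Equiv.Perm α, (∀ a, σ (σ a) = a) ∧ ∀ a, σ a ≠ a := by
  obtain ⟨k, hk⟩ := h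
  let f : α ≃ (Fin k ⊕ Fin k) :=
    (Fintype.equivFinOfCardEq hk).trans finSumFinEquiv.symm
  refine ⟨f.trans ((Equiv.sumComm (Fin k) (Fin k)).trans f.symm), fun a => ?_, fun a => ?_⟩
  · simp only [Equiv.trans_apply, Equiv.apply_symm_apply, Equiv.sumComm_apply, Sum.swap_swap,
      Equiv.symm_apply_apply]
  · simp only [Equiv.trans_apply, Equiv.sumComm_apply]
    intro hcon
    have h2 : Sum.swap (f a) = f a := by
      conv_rhs => rw [← hcon]
      simp
    rcases hfa : f a with x | x <;> rw [hfa] at h2 <;> simp at h2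

lemma exists_involution_fix (α : Type*) [Fintype α] [DecidableEq α] (a₀ : α)
    (h : Odd (Fintype.card α)) :
    ∃ σ : Equiv.Perm α, (∀ a, σ (σ a) = a) ∧ σ a₀ = a₀ ∧ ∀ a, a ≠ a₀ → σ a ≠ a := by
  classical
  have hcard : Even (Fintype.card {x : α // x ≠ a₀}) := by
    have h1 : Fintype.card {x : α // ¬ (x = a₀)} = Fintype.card α - 1 := by
      rw [Fintype.card_subtype_compl, Fintype.card_subtype_eq]
    have h2 : Fintype.card {x : α // x ≠ a₀} = Fintype.card α - 1 := h1
    rw [h2]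
    exact Nat.Odd.sub_odd h odd_one
  obtain ⟨τ, hτinv, hτfix⟩ := exists_involution {x : α // x ≠ a₀} hcard
  set σ : Equiv.Perm α := Equiv.Perm.subtypeCongr τ (Equiv.refl {x : α // ¬ x ≠ a₀}) with hσ
  have happly : ∀ (a : α) (h : a ≠ a₀), σ a = ↑(τ ⟨a, h⟩) := by
    intro a h
    rw [hσ]
    exact Equiv.Perm.subtypeCongr.left_apply τ (Equiv.refl {x : α // ¬ x ≠ a₀}) h
  have hA0 : σ a₀ = a₀ := by
    rw [hσ]
    have := Equiv.Perm.subtypeCongr.right_apply (ep := τ)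
      (en := Equiv.refl {x : α // ¬ x ≠ a₀}) (a := a₀) (not_not_intro rfl)
    simpa using this
  refine ⟨σ, fun a => ?_, hA0, fun a ha => ?_⟩
  · by_cases h : a = a₀
    · rw [h, hA0, hA0]
    · rw [happly a h, happly _ (τ ⟨a, h⟩).2, Subtype.coe_eta, hτinv]
  · rw [happly a ha]
    intro hcon
    apply hτfix ⟨a, ha⟩
    exact Subtype.ext hcon

lemma det_genPerm (σ : Equiv.Perm m) (d : m → ℝ) (hd : ∀ i, d i ≠ 0) :
    (Matrix.of fun i j => if σ i = j then d i else 0).det ≠ 0 := by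
  have heq : (Matrix.of fun i j => if σ i = j then d i else 0)
      = diagonal d * σ.permMatrix ℝ := by
    ext i j
    rw [diagonal_mul]
    show (if σ i = j then d i else 0) = d i * (σ.permMatrix ℝ) i j
    unfold Equiv.Perm.permMatrix
    rw [PEquiv.toMatrix_apply]
    by_cases h : σ i = j
    · subst h
      simp [Equiv.toPEquiv]
    · have h2 : ¬ (j = σ i) := fun hc => h hc.symm
      simp [Equiv.toPEquiv, h, h2]
  rw [heq, det_mul, det_diagonal, det_permutation]
  apply mul_ne_zero
  · exact Finset.prod_ne_zero_iff.mpr (fun i _ => hd i)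
  · exact_mod_cast Units.ne_zero (Equiv.Perm.sign σ)

end Witness

section Build

variable {m : Type*} [Fintype m] [DecidableEq m] [LinearOrder m]

noncomputable def ddOf (σ : Equiv.Perm m) : m → ℝ := fun i => if i < σ i then 1 else -1

lemma ddOf_ne_zero (σ : Equiv.Perm m) (i : m) : ddOf σ i ≠ 0 := by
  unfold ddOf
  by_cases h : i < σ i <;> simp [h]

noncomputable def BOf (σ : Equiv.Perm m) : Matrix m m ℝ :=
  Matrix.of fun i j => if σ i = j then ddOf σ i else 0

lemma BOf_skew (σ : Equiv.Perm m) (hinv : ∀ a, σ (σ a) = a) (hfix : ∀ a, σ a ≠ a) :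
    (BOf σ)ᵀ = -(BOf σ) := by
  ext i j
  show BOf σ j i = -(BOf σ i j)
  unfold BOf ddOf
  by_cases h : σ i = j
  · have h2 : σ j = i := by rw [← h, hinv]
    have hij : i ≠ j := by
      intro hc
      apply hfix i
      rw [h, hc]
    simp only [Matrix.of_apply, h2, h, if_pos rfl, if_true]
    rcases lt_trichotomy i j with hlt | heq | hgt
    · rw [if_neg (not_lt.mpr hlt.le), if_pos hlt]
    · exact absurd heq hij
    · rw [if_pos hgt, if_neg (not_lt.mpr hgt.le)]
      norm_num
  · have h2 : σ j ≠ i := by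
      intro hc
      apply h
      rw [← hc, hinv]
    simp [Matrix.of_apply, h, h2]

lemma BOf_det_ne_zero (σ : Equiv.Perm m) : (BOf σ).det ≠ 0 :=
  det_genPerm σ (ddOf σ) (ddOf_ne_zero σ)

end Build

section Witness2

variable {m : Type*} [Fintype m] [DecidableEq m] [LinearOrder m]

lemma card_not_mem (X : Finset m) : Fintype.card {x : m // ¬ x ∈ X} = Xᶜ.card := by
  rw [Fintype.card_subtype_compl, Fintype.card_coe, Finset.card_compl]

lemma witness_even (X : Finset m) (hX : Even X.card) (hXc : Even Xᶜ.card) :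
    ∃ B : Matrix m m ℝ, Bᵀ = -B ∧ (∀ i ∈ X, ∀ j ∉ X, B i j = 0) ∧
      B.det ≠ 0 ∧ (pSub B X).det ≠ 0 := by
  classical
  have hcX : Even (Fintype.card {x : m // x ∈ X}) := by rw [Fintype.card_coe]; exact hX
  have hcC : Even (Fintype.card {x : m // ¬ x ∈ X}) := by rw [card_not_mem]; exact hXc
  obtain ⟨σX, hXinv, hXfix⟩ := exists_involution _ hcX
  obtain ⟨σC, hCinv, hCfix⟩ := exists_involution _ hcC
  set σ : Equiv.Perm m := Equiv.Perm.subtypeCongr σX σC with hσdef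
  have hmemX : ∀ (a : m) (ha : a ∈ X), σ a = ↑(σX ⟨a, ha⟩) :=
    fun a ha => Equiv.Perm.subtypeCongr.left_apply σX σC ha
  have hmemC : ∀ (a : m) (ha : ¬ a ∈ X), σ a = ↑(σC ⟨a, ha⟩) :=
    fun a ha => Equiv.Perm.subtypeCongr.right_apply σX σC ha
  have hinv : ∀ a, σ (σ a) = a := by
    intro a
    by_cases ha : a ∈ X
    · rw [hmemX a ha, hmemX _ (σX ⟨a, ha⟩).2, Subtype.coe_eta, hXinv]
    · rw [hmemC a ha, hmemC _ (σC ⟨a, ha⟩).2, Subtype.coe_eta, hCinv]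
  have hfix : ∀ a, σ a ≠ a := by
    intro a
    by_cases ha : a ∈ X
    · rw [hmemX a ha]
      intro hc
      exact hXfix ⟨a, ha⟩ (Subtype.ext hc)
    · rw [hmemC a ha]
      intro hc
      exact hCfix ⟨a, ha⟩ (Subtype.ext hc)
  refine ⟨BOf σ, BOf_skew σ hinv hfix, ?_, BOf_det_ne_zero σ, ?_⟩
  · intro i hi j hj
    show (if σ i = j then ddOf σ i else 0) = 0
    rw [if_neg]
    intro hc
    apply hj
    rw [← hc, hmemX i hi]
    exact (σX ⟨i, hi⟩).2
  · have heq : pSub (BOf σ) X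
        = Matrix.of (fun i j : {x : m // x ∈ X} => if σX i = j then ddOf σ ↑i else 0) := by
      ext i j
      show (if σ ↑i = ↑j then ddOf σ ↑i else 0) = (if σX i = j then ddOf σ ↑i else 0)
      rw [hmemX ↑i i.2, Subtype.coe_eta]
      by_cases h : σX i = j
      · rw [if_pos h, if_pos (congrArg _ h)]
      · rw [if_neg h, if_neg (fun hc => h (Subtype.ext hc))]
    rw [heq]
    exact det_genPerm σX _ (fun i => ddOf_ne_zero σ ↑i)

lemma witness_odd (X : Finset m) (hX : Odd X.card) (hXc : Odd Xᶜ.card) :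
    ∃ (B : Matrix m m ℝ) (w₀ z₀ : m → ℝ), Bᵀ = -B ∧ (∀ i ∉ X, w₀ i = 0) ∧
      (∀ j ∈ X, z₀ j = 0) ∧ (∀ i ∈ X, ∀ j ∉ X, B i j = w₀ i * z₀ j) ∧ B.det ≠ 0 ∧
      ((fun i : X => w₀ (i : m)) ⬝ᵥ (adjugate (pSub B X) *ᵥ (fun i : X => w₀ (i : m))) ≠ 0) := by
  classical
  have hX0 : X.Nonempty := Finset.card_pos.mp hX.pos
  have hXc0 : Xᶜ.Nonempty := Finset.card_pos.mp hXc.pos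
  obtain ⟨x₀, hx₀⟩ := hX0
  obtain ⟨y₀, hy₀c⟩ := hXc0
  have hy₀ : ¬ y₀ ∈ X := Finset.mem_compl.mp hy₀c
  have hcX : Odd (Fintype.card {x : m // x ∈ X}) := by rw [Fintype.card_coe]; exact hX
  have hcC : Odd (Fintype.card {x : m // ¬ x ∈ X}) := by rw [card_not_mem]; exact hXc
  obtain ⟨σX, hXinv, hXa0, hXfix⟩ := exists_involution_fix _ ⟨x₀, hx₀⟩ hcX
  obtain ⟨σC, hCinv, hCa0, hCfix⟩ := exists_involution_fix _ ⟨y₀, hy₀⟩ hcC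
  set σ₁ : Equiv.Perm m := Equiv.Perm.subtypeCongr σX σC with hσ₁def
  have hmemX : ∀ (a : m) (ha : a ∈ X), σ₁ a = ↑(σX ⟨a, ha⟩) :=
    fun a ha => Equiv.Perm.subtypeCongr.left_apply σX σC ha
  have hmemC : ∀ (a : m) (ha : ¬ a ∈ X), σ₁ a = ↑(σC ⟨a, ha⟩) :=
    fun a ha => Equiv.Perm.subtypeCongr.right_apply σX σC ha
  have hxy : x₀ ≠ y₀ := fun hc => hy₀ (hc ▸ hx₀)
  have h1x : σ₁ x₀ = x₀ := by
    rw [hmemX x₀ hx₀]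
    exact congrArg Subtype.val hXa0
  have h1y : σ₁ y₀ = y₀ := by
    rw [hmemC y₀ hy₀]
    exact congrArg Subtype.val hCa0
  set σ : Equiv.Perm m := σ₁.trans (Equiv.swap x₀ y₀) with hσdef
  have hσx : σ x₀ = y₀ := by
    show Equiv.swap x₀ y₀ (σ₁ x₀) = y₀
    rw [h1x, Equiv.swap_apply_left]
  have hσy : σ y₀ = x₀ := by
    show Equiv.swap x₀ y₀ (σ₁ y₀) = x₀
    rw [h1y, Equiv.swap_apply_right]
  have h2 : ∀ a, a ≠ x₀ → σ₁ a ≠ x₀ := fun a hax hc => hax (σ₁.injective (hc.trans h1x.symm))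
  have h3 : ∀ a, a ≠ y₀ → σ₁ a ≠ y₀ := fun a hay hc => hay (σ₁.injective (hc.trans h1y.symm))
  have hstepσ : ∀ a, a ≠ x₀ → a ≠ y₀ → σ a = σ₁ a := by
    intro a hax hay
    show Equiv.swap x₀ y₀ (σ₁ a) = σ₁ a
    rw [Equiv.swap_apply_of_ne_of_ne (h2 a hax) (h3 a hay)]
  have h1fix : ∀ a, a ≠ x₀ → a ≠ y₀ → σ₁ a ≠ a := by
    intro a hax hay
    by_cases ha : a ∈ X
    · rw [hmemX a ha]
      intro hc
      exact hXfix ⟨a, ha⟩ (fun hceq => hax (congrArg Subtype.val hceq)) (Subtype.ext hc)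
    · rw [hmemC a ha]
      intro hc
      exact hCfix ⟨a, ha⟩ (fun hceq => hay (congrArg Subtype.val hceq)) (Subtype.ext hc)
  have h1inv : ∀ a, σ₁ (σ₁ a) = a := by
    intro a
    by_cases ha : a ∈ X
    · rw [hmemX a ha, hmemX _ (σX ⟨a, ha⟩).2, Subtype.coe_eta, hXinv]
    · rw [hmemC a ha, hmemC _ (σC ⟨a, ha⟩).2, Subtype.coe_eta, hCinv]
  have hinv : ∀ a, σ (σ a) = a := by
    intro a
    by_cases hax : a = x₀
    · rw [hax, hσx, hσy]
    by_cases hay : a = y₀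
    · rw [hay, hσy, hσx]
    rw [hstepσ a hax hay, hstepσ (σ₁ a) (h2 a hax) (h3 a hay), h1inv]
  have hfix : ∀ a, σ a ≠ a := by
    intro a
    by_cases hax : a = x₀
    · rw [hax, hσx]
      exact fun hc => hxy hc.symm
    by_cases hay : a = y₀
    · rw [hay, hσy]
      exact fun hc => hxy hc
    rw [hstepσ a hax hay]
    exact h1fix a hax hay
  have hmem : ∀ a ∈ X, a ≠ x₀ → σ a ∈ X := by
    intro a ha hax
    rw [hstepσ a hax (fun hc => hy₀ (hc ▸ ha)), hmemX a ha]
    exact (σX ⟨a, ha⟩).2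
  refine ⟨BOf σ, (fun i => if i = x₀ then ddOf σ x₀ else 0), (fun j => if j = y₀ then 1 else 0),
    BOf_skew σ hinv hfix, ?_, ?_, ?_, BOf_det_ne_zero σ, ?_⟩
  · intro i hi
    show (if i = x₀ then ddOf σ x₀ else 0) = 0
    rw [if_neg]
    intro hc
    exact hi (hc ▸ hx₀)
  · intro j hj
    show (if j = y₀ then (1:ℝ) else 0) = 0
    rw [if_neg]
    intro hc
    exact hy₀ (hc ▸ hj)
  · intro i hi j hj
    show (if σ i = j then ddOf σ i else 0)
      = (if i = x₀ then ddOf σ x₀ else 0) * (if j = y₀ then 1 else 0)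
    by_cases hix : i = x₀
    · subst hix
      rw [if_pos rfl]
      by_cases hjy : j = y₀
      · subst hjy
        rw [if_pos hσx, if_pos rfl, mul_one]
      · rw [if_neg (fun hc : σ i = j => hjy (by rw [← hc, hσx])), if_neg hjy, mul_zero]
    · rw [if_neg, if_neg hix, zero_mul]
      intro hc
      apply hj
      rw [← hc]
      exact hmem i hi hix
  · set x₀' : {x : m // x ∈ X} := ⟨x₀, hx₀⟩ with hx₀'def
    have hw' : (fun i : X => (if (i : m) = x₀ then ddOf σ x₀ else 0))
        = Pi.single x₀' (ddOf σ x₀) := by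
      funext i
      rw [Pi.single_apply]
      by_cases h : i = x₀'
      · rw [if_pos (congrArg Subtype.val h), if_pos h]
      · rw [if_neg (fun hc => h (Subtype.ext hc)), if_neg h]
    rw [hw', mulVec_single, single_dotProduct]
    apply mul_ne_zero (ddOf_ne_zero σ x₀)
    apply mul_ne_zero ?_ (ddOf_ne_zero σ x₀)
    change adjugate (pSub (BOf σ) X) x₀' x₀' ≠ 0
    rw [adjugate_apply]
    have heq : (pSub (BOf σ) X).updateRow x₀' (Pi.single x₀' 1)
        = Matrix.of (fun i j : {x : m // x ∈ X} =>
            if σX i = j then (if i = x₀' then 1 else ddOf σ ↑i) else 0) := by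
      ext i j
      by_cases hi : i = x₀'
      · rw [hi, Matrix.updateRow_self, Pi.single_apply]
        show _ = (if σX x₀' = j then (if x₀' = x₀' then (1:ℝ) else ddOf σ ↑x₀') else 0)
        rw [show σX x₀' = x₀' from hXa0, if_pos rfl]
        by_cases h : j = x₀'
        · rw [if_pos h, if_pos h.symm]
        · rw [if_neg h, if_neg (fun hc => h hc.symm)]
      · rw [Matrix.updateRow_ne hi]
        show (if σ ↑i = ↑j then ddOf σ ↑i else 0)
          = (if σX i = j then (if i = x₀' then (1:ℝ) else ddOf σ ↑i) else 0)
        have hix : (i : m) ≠ x₀ := fun hc => hi (Subtype.ext hc)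
        have hiy : (i : m) ≠ y₀ := fun hc => hy₀ (hc ▸ i.2)
        rw [hstepσ ↑i hix hiy, hmemX ↑i i.2, Subtype.coe_eta, if_neg hi]
        by_cases h : σX i = j
        · rw [if_pos (congrArg Subtype.val h), if_pos h]
        · rw [if_neg (fun hc => h (Subtype.ext hc)), if_neg h]
    rw [heq]
    exact det_genPerm σX _ (fun i => by by_cases h : i = x₀' <;> simp [h, ddOf_ne_zero σ])

end Witness2

section Curve

variable {m : Type*} [Fintype m] [DecidableEq m]

noncomputable def linp (a b : ℝ) : Polynomial ℝ :=
  Polynomial.C a + Polynomial.X * Polynomial.C (b - a)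

@[simp] lemma linp_eval (a b t : ℝ) : (linp a b).eval t = a + t * (b - a) := by
  simp [linp]

noncomputable def curveM (Xs : Finset m) (A B : Matrix m m ℝ) (w w₀ z z₀ : m → ℝ) :
    Matrix m m (Polynomial ℝ) := Matrix.of fun i j =>
  if i ∈ Xs then
    (if j ∈ Xs then linp (A i j) (B i j) else linp (w i) (w₀ i) * linp (z j) (z₀ j))
  else
    (if j ∈ Xs then -(linp (w j) (w₀ j) * linp (z i) (z₀ i)) else linp (A i j) (B i j))

noncomputable def MInvP (Xs : Finset m) (M : Matrix m m (Polynomial ℝ)) :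
    Matrix m m (Polynomial ℝ) :=
  Matrix.of fun i j => if i ∈ Xs ∧ j ∈ Xs then -(M i j) else M i j

lemma MInvP_map (Xs : Finset m) (t : ℝ) (M : Matrix m m (Polynomial ℝ)) :
    MInv Xs (M.map (Polynomial.eval t)) = (MInvP Xs M).map (Polynomial.eval t) := by
  ext i j
  show (if i ∈ Xs ∧ j ∈ Xs then -(M i j).eval t else (M i j).eval t)
    = ((if i ∈ Xs ∧ j ∈ Xs then -(M i j) else M i j)).eval t
  by_cases h : i ∈ Xs ∧ j ∈ Xs <;> simp [h]

lemma det_map_eval (t : ℝ) {α : Type*} [Fintype α] [DecidableEq α]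
    (M : Matrix α α (Polynomial ℝ)) :
    (M.map (Polynomial.eval t)).det = Polynomial.eval t M.det :=
  ((Polynomial.evalRingHom t).map_det M).symm

def pSubP (M : Matrix m m (Polynomial ℝ)) (Xs : Finset m) : Matrix Xs Xs (Polynomial ℝ) :=
  M.submatrix (fun i => (i : m)) (fun j => (j : m))

lemma pSub_map (Xs : Finset m) (f : Polynomial ℝ → ℝ) (M : Matrix m m (Polynomial ℝ)) :
    pSub (M.map f) Xs = (pSubP M Xs).map f := rfl

variable {Xs : Finset m} {A B : Matrix m m ℝ} {w w₀ z z₀ : m → ℝ}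

lemma curve_eval_zero (hA : Aᵀ = -A)
    (hblk : ∀ i ∈ Xs, ∀ j ∉ Xs, A i j = w i * z j) :
    (curveM Xs A B w w₀ z z₀).map (Polynomial.eval 0) = A := by
  ext i j
  show Polynomial.eval 0 (curveM Xs A B w w₀ z z₀ i j) = A i j
  have hAji : A j i = -A i j := by
    have h := congrFun (congrFun hA (i : m)) (j : m)
    simp only [transpose_apply, Matrix.neg_apply] at h
    linarith
  unfold curveM
  by_cases hi : i ∈ Xs <;> by_cases hj : j ∈ Xs <;>
    simp only [Matrix.of_apply, hi, hj, if_true, if_false, Polynomial.eval_mul,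
      Polynomial.eval_neg, linp_eval]
  · ring
  · rw [hblk i hi j hj]; ring
  · rw [show A j i = w j * z i from hblk j hj i hi] at hAji
    rw [show A i j = -(w j * z i) from by linarith]
    ring
  · ring

lemma curve_eval_one (hB : Bᵀ = -B) (hBblk : ∀ i ∈ Xs, ∀ j ∉ Xs, B i j = w₀ i * z₀ j) :
    (curveM Xs A B w w₀ z z₀).map (Polynomial.eval 1) = B := by
  ext i j
  show Polynomial.eval 1 (curveM Xs A B w w₀ z z₀ i j) = B i j
  have hBji : B j i = -B i j := by
    have h := congrFun (congrFun hB (i : m)) (j : m)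
    simp only [transpose_apply, Matrix.neg_apply] at h
    linarith
  unfold curveM
  by_cases hi : i ∈ Xs <;> by_cases hj : j ∈ Xs <;>
    simp only [Matrix.of_apply, hi, hj, if_true, if_false, Polynomial.eval_mul,
      Polynomial.eval_neg, linp_eval]
  · ring
  · rw [hBblk i hi j hj]; ring
  · rw [show B j i = w₀ j * z₀ i from hBblk j hj i hi] at hBji
    rw [show B i j = -(w₀ j * z₀ i) from by linarith]
    ring
  · ring

lemma curve_skew (hA : Aᵀ = -A) (hB : Bᵀ = -B) (t : ℝ) :
    ((curveM Xs A B w w₀ z z₀).map (Polynomial.eval t))ᵀ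
      = -((curveM Xs A B w w₀ z z₀).map (Polynomial.eval t)) := by
  ext i j
  show Polynomial.eval t (curveM Xs A B w w₀ z z₀ j i)
    = -Polynomial.eval t (curveM Xs A B w w₀ z z₀ i j)
  have hAji : A j i = -A i j := by
    have h := congrFun (congrFun hA (i : m)) (j : m)
    simp only [transpose_apply, Matrix.neg_apply] at h
    linarith
  have hBji : B j i = -B i j := by
    have h := congrFun (congrFun hB (i : m)) (j : m)
    simp only [transpose_apply, Matrix.neg_apply] at h
    linarith
  unfold curveM
  by_cases hi : i ∈ Xs <;> by_cases hj : j ∈ Xs <;>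
    simp only [Matrix.of_apply, hi, hj, if_true, if_false, Polynomial.eval_mul,
      Polynomial.eval_neg, linp_eval] <;>
    (try rw [hAji, hBji]) <;> ring

lemma curve_blk (t : ℝ) :
    ∀ i ∈ Xs, ∀ j ∉ Xs, ((curveM Xs A B w w₀ z z₀).map (Polynomial.eval t)) i j
      = (w i + t * (w₀ i - w i)) * (z j + t * (z₀ j - z j)) := by
  intro i hi j hj
  show Polynomial.eval t (curveM Xs A B w w₀ z z₀ i j) = _
  unfold curveM
  simp [hi, hj]

end Curve

section Bridges

variable {m : Type*} [Fintype m] [DecidableEq m]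

lemma eval_dot {α : Type*} [Fintype α] (t : ℝ) (a b : α → Polynomial ℝ) :
    Polynomial.eval t (a ⬝ᵥ b) = (fun i => Polynomial.eval t (a i)) ⬝ᵥ (fun i => Polynomial.eval t (b i)) := by
  unfold dotProduct
  rw [Polynomial.eval_finset_sum]
  apply Finset.sum_congr rfl
  intro i _
  rw [Polynomial.eval_mul]

lemma eval_mulVec {α : Type*} [Fintype α] (t : ℝ) (M : Matrix α α (Polynomial ℝ))
    (b : α → Polynomial ℝ) :
    (fun i => Polynomial.eval t ((M *ᵥ b) i))
      = (M.map (Polynomial.eval t)) *ᵥ (fun i => Polynomial.eval t (b i)) := by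
  funext i
  show Polynomial.eval t (∑ j, M i j * b j) = ∑ j, (M i j).eval t * (b j).eval t
  rw [Polynomial.eval_finset_sum]
  apply Finset.sum_congr rfl
  intro j _
  rw [Polynomial.eval_mul]

lemma root_set_infinite {g : Polynomial ℝ} (hg : g ≠ 0) : {t : ℝ | g.eval t ≠ 0}.Infinite := by
  have h1 : {t : ℝ | g.eval t ≠ 0} = {t : ℝ | g.IsRoot t}ᶜ := by
    ext t
    simp [Polynomial.IsRoot]
  rw [h1]
  exact (Polynomial.finite_setOf_isRoot hg).infinite_compl

lemma bridge_even (Xs : Finset m) (A B : Matrix m m ℝ)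
    (w z : m → ℝ) (hA : Aᵀ = -A)
    (hw : ∀ i ∉ Xs, w i = 0) (hz : ∀ j ∈ Xs, z j = 0)
    (hblk : ∀ i ∈ Xs, ∀ j ∉ Xs, A i j = w i * z j)
    (hB : Bᵀ = -B) (hBblk : ∀ i ∈ Xs, ∀ j ∉ Xs, B i j = 0)
    (hBdet : B.det ≠ 0) (hBP : (pSub B Xs).det ≠ 0) :
    (MInv Xs A).det = A.det := by
  classical
  set P : Matrix m m (Polynomial ℝ) := curveM Xs A B w 0 z 0 with hPdef
  set q : Polynomial ℝ := (MInvP Xs P).det - P.det with hqdef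
  set g : Polynomial ℝ := P.det * (pSubP P Xs).det with hgdef
  have heval : ∀ t : ℝ, q.eval t = (MInv Xs (P.map (Polynomial.eval t))).det
      - (P.map (Polynomial.eval t)).det := by
    intro t
    rw [hqdef, Polynomial.eval_sub, MInvP_map, det_map_eval, det_map_eval]
  have hgeval : ∀ t : ℝ, g.eval t = (P.map (Polynomial.eval t)).det *
      (pSub (P.map (Polynomial.eval t)) Xs).det := by
    intro t
    rw [hgdef, Polynomial.eval_mul, det_map_eval, pSub_map, det_map_eval]
  have hBblk' : ∀ i ∈ Xs, ∀ j ∉ Xs, B i j = (0 : m → ℝ) i * (0 : m → ℝ) j := by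
    intro i hi j hj
    rw [hBblk i hi j hj]
    simp
  have hg1 : g.eval 1 ≠ 0 := by
    rw [hgeval 1, hPdef, curve_eval_one hB hBblk']
    exact mul_ne_zero hBdet hBP
  have hgne : g ≠ 0 := fun hc => hg1 (by rw [hc]; simp)
  have hq0 : ∀ t ∈ {t : ℝ | g.eval t ≠ 0}, q.IsRoot t := by
    intro t ht
    have hgt : (P.map (Polynomial.eval t)).det *
        (pSub (P.map (Polynomial.eval t)) Xs).det ≠ 0 := by
      rw [← hgeval t]; exact ht
    have hdet : IsUnit (P.map (Polynomial.eval t)).det :=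
      isUnit_iff_ne_zero.mpr (left_ne_zero_of_mul hgt)
    have hpdet : IsUnit (pSub (P.map (Polynomial.eval t)) Xs).det :=
      isUnit_iff_ne_zero.mpr (right_ne_zero_of_mul hgt)
    have hskew := curve_skew (Xs := Xs) (A := A) (B := B) (w := w) (w₀ := 0)
      (z := z) (z₀ := 0) hA hB t
    have hwt : ∀ i ∉ Xs, (w i + t * ((0 : m → ℝ) i - w i)) = 0 := by
      intro i hi
      rw [hw i hi]
      simp
    have hzt : ∀ j ∈ Xs, (z j + t * ((0 : m → ℝ) j - z j)) = 0 := by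
      intro j hj
      rw [hz j hj]
      simp
    have hblkt := curve_blk (Xs := Xs) (A := A) (B := B) (w := w) (w₀ := 0)
      (z := z) (z₀ := 0) t
    show q.eval t = 0
    rw [heval t, sub_eq_zero]
    exact det_MInv_even hskew hwt hzt hblkt hdet hpdet
  have hqzero : q = 0 :=
    Polynomial.eq_zero_of_infinite_isRoot q ((root_set_infinite hgne).mono hq0)
  have h0 := heval 0
  rw [hqzero, Polynomial.eval_zero, hPdef, curve_eval_zero hA hblk] at h0
  have := h0.symm
  rw [sub_eq_zero] at this
  exact this

end Bridges

section BridgeOdd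

variable {m : Type*} [Fintype m] [DecidableEq m]

lemma bridge_odd (Xs : Finset m) (A B : Matrix m m ℝ)
    (w z w₀ z₀ : m → ℝ) (hA : Aᵀ = -A)
    (hw : ∀ i ∉ Xs, w i = 0) (hz : ∀ j ∈ Xs, z j = 0)
    (hblk : ∀ i ∈ Xs, ∀ j ∉ Xs, A i j = w i * z j)
    (hB : Bᵀ = -B) (hw₀ : ∀ i ∉ Xs, w₀ i = 0) (hz₀ : ∀ j ∈ Xs, z₀ j = 0)
    (hBblk : ∀ i ∈ Xs, ∀ j ∉ Xs, B i j = w₀ i * z₀ j) (hBdet : B.det ≠ 0)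
    (hQ : (fun i : Xs => w₀ (i : m)) ⬝ᵥ
      (adjugate (pSub B Xs) *ᵥ (fun i : Xs => w₀ (i : m))) ≠ 0) :
    (MInv Xs A).det = A.det := by
  classical
  set P : Matrix m m (Polynomial ℝ) := curveM Xs A B w w₀ z z₀ with hPdef
  set wP : Xs → Polynomial ℝ := fun i => linp (w (i : m)) (w₀ (i : m)) with hwPdef
  set q : Polynomial ℝ := (MInvP Xs P).det - P.det with hqdef
  set g : Polynomial ℝ := P.det * (wP ⬝ᵥ (adjugate (pSubP P Xs) *ᵥ wP)) with hgdef
  have heval : ∀ t : ℝ, q.eval t = (MInv Xs (P.map (Polynomial.eval t))).det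
      - (P.map (Polynomial.eval t)).det := by
    intro t
    rw [hqdef, Polynomial.eval_sub, MInvP_map, det_map_eval, det_map_eval]
  have hadj : ∀ t : ℝ, adjugate (pSub (P.map (Polynomial.eval t)) Xs)
      = (adjugate (pSubP P Xs)).map (Polynomial.eval t) := by
    intro t
    rw [pSub_map]
    have h := RingHom.map_adjugate (Polynomial.evalRingHom t) (pSubP P Xs)
    simpa [Polynomial.coe_evalRingHom] using h.symm
  have hgeval : ∀ t : ℝ, g.eval t = (P.map (Polynomial.eval t)).det *
      ((fun i : Xs => (wP i).eval t) ⬝ᵥ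
        (adjugate (pSub (P.map (Polynomial.eval t)) Xs) *ᵥ (fun i : Xs => (wP i).eval t))) := by
    intro t
    rw [hgdef, Polynomial.eval_mul, det_map_eval, eval_dot, eval_mulVec, hadj]
  have hwP1 : (fun i : Xs => (wP i).eval 1) = fun i : Xs => w₀ (i : m) := by
    funext i
    rw [hwPdef]
    simp only [linp_eval]
    ring
  have hg1 : g.eval 1 ≠ 0 := by
    rw [hgeval 1, hPdef, curve_eval_one hB hBblk, hwP1]
    exact mul_ne_zero hBdet hQ
  have hgne : g ≠ 0 := fun hc => hg1 (by rw [hc]; simp)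
  have hq0 : ∀ t ∈ {t : ℝ | g.eval t ≠ 0}, q.IsRoot t := by
    intro t ht
    have hgt := ht
    rw [Set.mem_setOf_eq, hgeval t] at hgt
    have hdet : IsUnit (P.map (Polynomial.eval t)).det :=
      isUnit_iff_ne_zero.mpr (left_ne_zero_of_mul hgt)
    have hgate := right_ne_zero_of_mul hgt
    have hskew := curve_skew (Xs := Xs) (A := A) (B := B) (w := w) (w₀ := w₀)
      (z := z) (z₀ := z₀) hA hB t
    have hwt : ∀ i ∉ Xs, (w i + t * (w₀ i - w i)) = 0 := by
      intro i hi
      rw [hw i hi, hw₀ i hi]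
      simp
    have hzt : ∀ j ∈ Xs, (z j + t * (z₀ j - z j)) = 0 := by
      intro j hj
      rw [hz j hj, hz₀ j hj]
      simp
    have hblkt := curve_blk (Xs := Xs) (A := A) (B := B) (w := w) (w₀ := w₀)
      (z := z) (z₀ := z₀) t
    have hgate' : (fun i : Xs => (w (i : m) + t * (w₀ (i : m) - w (i : m)))) ⬝ᵥ
        (adjugate (pSub (P.map (Polynomial.eval t)) Xs) *ᵥ
          (fun i : Xs => (w (i : m) + t * (w₀ (i : m) - w (i : m))))) ≠ 0 := by
      have hform : (fun i : Xs => (wP i).eval t)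
          = fun i : Xs => (w (i : m) + t * (w₀ (i : m) - w (i : m))) := by
        funext i
        rw [hwPdef]
        simp only [linp_eval]
      rwa [hform] at hgate
    obtain ⟨hodd, p, hpker, hpw⟩ := odd_from_adj hskew hwt hgate'
    show q.eval t = 0
    rw [heval t, sub_eq_zero]
    exact det_MInv_odd hskew hwt hzt hblkt hdet hodd p hpker hpw
  have hqzero : q = 0 :=
    Polynomial.eq_zero_of_infinite_isRoot q ((root_set_infinite hgne).mono hq0)
  have h0 := heval 0
  rw [hqzero, Polynomial.eval_zero, hPdef, curve_eval_zero hA hblk] at h0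
  have := h0.symm
  rw [sub_eq_zero] at this
  exact this

end BridgeOdd

theorem stmt_6 {n : ℕ} (A : Matrix (Fin n) (Fin n) ℝ) (hA : Aᵀ = -A)
    (X : Finset (Fin n)) (hX : IsHLClan A X) :
    (MInv X A).det = A.det := by
  classical
  obtain ⟨u, v, huv⟩ := rank_factor (oSub A X Xᶜ) hX.1
  set w : Fin n → ℝ := fun i => if h : i ∈ X then u ⟨i, h⟩ else 0 with hwdef
  set z : Fin n → ℝ := fun j => if h : j ∈ Xᶜ then v ⟨j, h⟩ else 0 with hzdef
  have hw : ∀ i ∉ X, w i = 0 := by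
    intro i hi
    simp only [hwdef]
    rw [dif_neg hi]
  have hz : ∀ j ∈ X, z j = 0 := by
    intro j hj
    simp only [hzdef]
    rw [dif_neg (by simp [hj])]
  have hblk : ∀ i ∈ X, ∀ j ∉ X, A i j = w i * z j := by
    intro i hi j hj
    have hj' : j ∈ Xᶜ := Finset.mem_compl.mpr hj
    simp only [hwdef, hzdef]
    rw [dif_pos hi, dif_pos hj']
    exact huv ⟨i, hi⟩ ⟨j, hj'⟩
  rcases Nat.even_or_odd n with hn | hn
  · have hsum : X.card + Xᶜ.card = n := by
      rw [Finset.card_add_card_compl, Fintype.card_fin]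
    have hiff := Nat.even_add.mp (show Even (X.card + Xᶜ.card) by rw [hsum]; exact hn)
    rcases Nat.even_or_odd X.card with hXe | hXo
    · have hXce : Even Xᶜ.card := hiff.mp hXe
      obtain ⟨B, hBskew, hBblk, hBdet, hBP⟩ := witness_even X hXe hXce
      exact bridge_even X A B w z hA hw hz hblk hBskew hBblk hBdet hBP
    · have hXco : Odd Xᶜ.card := by
        rw [← Nat.not_even_iff_odd]
        intro hc
        exact (Nat.not_even_iff_odd.mpr hXo) (hiff.mpr hc)
      obtain ⟨B, w₀, z₀, hBskew, hw₀, hz₀, hBblk, hBdet, hQ⟩ := witness_odd X hXo hXco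
      exact bridge_odd X A B w z w₀ z₀ hA hw hz hblk hBskew hw₀ hz₀ hBblk hBdet hQ
  · have h1 : A.det = 0 := skew_det_zero_of_odd hA (by rwa [Fintype.card_fin])
    have h2 : (MInv X A).det = 0 :=
      skew_det_zero_of_odd (MInv_skew hA) (by rwa [Fintype.card_fin])
    rw [h1, h2]
end

section
/- If A is an n×n skew-symmetric matrix and X is an HL-clan of A, then A and Inv(X,A) have equal corresponding principal minors of all orders, i.e., det(A[Y]) = det(Inv(X,A)[Y]) for every subset Y of [n]. -/
open Matrix

/-! ### Auxiliary lemmas -/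

section Aux

variable {k l o : Type*}

/-- The determinant of a skew-symmetric matrix is unchanged by negation. -/
lemma det_neg_skew [Fintype k] [DecidableEq k] (B : Matrix k k ℝ) (hB : Bᵀ = -B) :
    (-B).det = B.det := by
  rw [← hB, Matrix.det_transpose]

/-- `uᵀ S u = 0` for skew-symmetric `S`. -/
lemma skew_dot_s7 [Fintype k] (S : Matrix k k ℝ) (hS : Sᵀ = -S) (u : k → ℝ) :
    u ⬝ᵥ S *ᵥ u = 0 := by
  have h1 : u ⬝ᵥ S *ᵥ u = u ᵥ* S ⬝ᵥ u := dotProduct_mulVec u S u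
  have h2 : u ᵥ* S = -(S *ᵥ u) := by
    rw [← mulVec_transpose, hS, neg_mulVec]
  have h3 : u ⬝ᵥ S *ᵥ u = -(u ⬝ᵥ S *ᵥ u) := by
    nth_rewrite 1 [h1, h2]
    rw [neg_dotProduct, dotProduct_comm]
  linarith

lemma mul_vecMulVec [Fintype k] (M : Matrix k k ℝ) (u : k → ℝ) (v : l → ℝ) :
    M * vecMulVec u v = vecMulVec (M *ᵥ u) v := by
  ext i j
  simp only [Matrix.mul_apply, vecMulVec_apply, mulVec, dotProduct, Finset.sum_mul]
  exact Finset.sum_congr rfl fun x _ => by ring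

lemma vecMulVec_mul [Fintype l] (u : k → ℝ) (v : l → ℝ) (M : Matrix l l ℝ) :
    vecMulVec u v * M = vecMulVec u (v ᵥ* M) := by
  ext i j
  simp only [Matrix.mul_apply, vecMulVec_apply, vecMul, dotProduct, Finset.mul_sum]
  exact Finset.sum_congr rfl fun x _ => by ring

lemma vecMulVec_mulVec [Fintype l] (u : k → ℝ) (v : l → ℝ) (x : l → ℝ) :
    vecMulVec u v *ᵥ x = (v ⬝ᵥ x) • u := by
  funext i
  simp only [mulVec, dotProduct, vecMulVec_apply, Pi.smul_apply, smul_eq_mul,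
    Finset.sum_mul]
  exact Finset.sum_congr rfl fun x _ => by ring

lemma vecMul_vecMulVec [Fintype k] (x : k → ℝ) (u : k → ℝ) (v : l → ℝ) :
    x ᵥ* vecMulVec u v = (x ⬝ᵥ u) • v := by
  funext j
  simp only [vecMul, dotProduct, vecMulVec_apply, Pi.smul_apply, smul_eq_mul]
  rw [Finset.sum_mul]
  exact Finset.sum_congr rfl fun i _ => by ring

lemma vecMulVec_mul_vecMulVec [Fintype l] (a : k → ℝ) (b c : l → ℝ) (d : o → ℝ) :
    vecMulVec a b * vecMulVec c d = (b ⬝ᵥ c) • vecMulVec a d := by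
  ext i j
  simp only [Matrix.mul_apply, vecMulVec_apply, Matrix.smul_apply, smul_eq_mul, dotProduct]
  rw [Finset.sum_mul]
  exact Finset.sum_congr rfl fun x _ => by ring

/-- determinant of a rank-one perturbation of the identity -/
lemma det_one_add_vecMulVec [Fintype k] [DecidableEq k] (a b : k → ℝ) :
    (1 + vecMulVec a b).det = 1 + b ⬝ᵥ a := by
  rw [vecMulVec_eq Unit, Matrix.det_one_add_replicateCol_mul_replicateRow]

/-- Determinant of a matrix that decouples over a predicate. -/
lemma det_decouple [Fintype k] [DecidableEq k] (M : Matrix k k ℝ)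
    (p : k → Prop) [DecidablePred p]
    (h1 : ∀ i j, p i → ¬ p j → M i j = 0) (h2 : ∀ i j, ¬ p i → p j → M i j = 0) :
    M.det = (M.submatrix (Subtype.val : {x // p x} → k) Subtype.val).det *
            (M.submatrix (Subtype.val : {x // ¬ p x} → k) Subtype.val).det := by
  rw [← det_submatrix_equiv_self (Equiv.sumCompl p) M]
  have hE : M.submatrix (Equiv.sumCompl p) (Equiv.sumCompl p) =
      fromBlocks (M.submatrix Subtype.val Subtype.val) 0 0
        (M.submatrix Subtype.val Subtype.val) := by
    ext i j
    cases i with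
    | inl i =>
      cases j with
      | inl j => rfl
      | inr j => exact h1 i.1 j.1 i.2 j.2
    | inr i =>
      cases j with
      | inl j => exact h2 i.1 j.1 i.2 j.2
      | inr j => rfl
  rw [hE, det_fromBlocks_zero₂₁]

/-- A matrix of rank at most one factors as an outer product. -/
lemma rank_le_one_exists [Fintype k] [Fintype l] (A : Matrix k l ℝ)
    (h : A.rank ≤ 1) : ∃ (u : k → ℝ) (v : l → ℝ), ∀ i j, A i j = u i * v j := by
  classical
  have h' : Module.finrank ℝ ↥(LinearMap.range A.mulVecLin) ≤ 1 := h
  obtain ⟨u₀, hu₀⟩ := finrank_le_one_iff.mp h'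
  have key : ∀ j : l, ∃ c : ℝ, ∀ i, A i j = (u₀ : k → ℝ) i * c := by
    intro j
    have hmem : A *ᵥ Pi.single j 1 ∈ LinearMap.range A.mulVecLin :=
      ⟨Pi.single j 1, A.mulVecLin_apply _⟩
    obtain ⟨c, hc⟩ := hu₀ ⟨_, hmem⟩
    refine ⟨c, fun i => ?_⟩
    have h2 : c • (u₀ : k → ℝ) = A *ᵥ Pi.single j 1 := congrArg Subtype.val hc
    have h3 := congrFun h2 i
    simp only [Pi.smul_apply, smul_eq_mul, mulVec_single, MulOpposite.op_one, one_smul, Matrix.col_apply, mul_one] at h3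
    rw [← h3, mul_comm]
  choose v hv using key
  exact ⟨(u₀ : k → ℝ), v, fun i j => hv j i⟩

/-- The key block computation:  negating the skew-symmetric upper-left block of a
skew-style block matrix with rank-one couplings does not change the determinant. -/
lemma key_blocks [Fintype k] [DecidableEq k] [Fintype l] [DecidableEq l]
    (B : Matrix k k ℝ) (hB : Bᵀ = -B) (u : k → ℝ) (v : l → ℝ) (F : Matrix l l ℝ) :
    (fromBlocks B (vecMulVec u v) (-vecMulVec v u) F).det
      = (fromBlocks (-B) (vecMulVec u v) (-vecMulVec v u) F).det := by
  classical
  have schur : ∀ W : Matrix k k ℝ, Wᵀ = -W → (-vecMulVec v u) * W * vecMulVec u v = 0 := by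
    intro W hW
    rw [Matrix.neg_mul, Matrix.neg_mul, _root_.vecMulVec_mul, _root_.vecMulVec_mul_vecMulVec]
    have h0 : (u ᵥ* W) ⬝ᵥ u = 0 := by rw [← dotProduct_mulVec]; exact skew_dot_s7 W hW u
    rw [h0, zero_smul, neg_zero]
  by_cases hdet : IsUnit B.det
  · -- invertible case : Schur complement
    have hdet' : IsUnit (-B).det := by rwa [det_neg_skew B hB]
    haveI : Invertible B := B.invertibleOfIsUnitDet hdet
    haveI : Invertible (-B) := (-B).invertibleOfIsUnitDet hdet'
    have hneginv : (-B)⁻¹ = -(B⁻¹) :=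
      inv_eq_left_inv (by rw [neg_mul_neg, nonsing_inv_mul _ hdet])
    have hBinv : (B⁻¹)ᵀ = -(B⁻¹) := by
      rw [Matrix.transpose_nonsing_inv, hB, hneginv]
    have hBinv' : (-(B⁻¹))ᵀ = -(-(B⁻¹)) := by rw [Matrix.transpose_neg, hBinv]
    rw [det_fromBlocks₁₁, det_fromBlocks₁₁, invOf_eq_nonsing_inv, invOf_eq_nonsing_inv,
      hneginv, schur _ hBinv, schur _ hBinv', sub_zero, det_neg_skew B hB]
  · -- singular case
    have hdet0 : B.det = 0 := by
      by_contra h; exact hdet (isUnit_iff_ne_zero.mpr h)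
    obtain ⟨w, hw0, hBw⟩ := (Matrix.exists_mulVec_eq_zero_iff).mpr hdet0
    by_cases hc : u ⬝ᵥ w = 0
    · -- common kernel vector
      have hker : ∀ B' : Matrix k k ℝ, B' *ᵥ w = 0 →
          (fromBlocks B' (vecMulVec u v) (-vecMulVec v u) F).det = 0 := by
        intro B' hB'
        rw [← Matrix.exists_mulVec_eq_zero_iff]
        refine ⟨Sum.elim w 0, fun h0 => hw0 (funext fun i => congrFun h0 (Sum.inl i)), ?_⟩
        rw [fromBlocks_mulVec]
        simp [hB', _root_.vecMulVec_mulVec, hc, neg_mulVec]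
      rw [hker B hBw, hker (-B) (by rw [neg_mulVec, hBw, neg_zero])]
    · -- congruence reduction
      set c := u ⬝ᵥ w with hc_def
      obtain ⟨i₀, hi₀⟩ : ∃ i, w i ≠ 0 := by
        by_contra h; push_neg at h; exact hw0 (funext h)
      set e : k → ℝ := Pi.single i₀ 1 with he_def
      have he_dotl : ∀ x : k → ℝ, e ⬝ᵥ x = x i₀ := by
        intro x; simp [he_def]
      have he_dotr : ∀ x : k → ℝ, x ⬝ᵥ e = x i₀ := by
        intro x; simp [he_def]
      set u' : k → ℝ := u + (c - u i₀) • e with hu'_def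
      have hu'i₀ : u' i₀ = c := by
        simp only [hu'_def, Pi.add_apply, Pi.smul_apply, he_def, Pi.single_eq_same,
          smul_eq_mul, mul_one]
        ring
      set E₁ : Matrix k k ℝ := vecMulVec e (w - e) with hE₁
      set E₂ : Matrix k k ℝ := vecMulVec (c⁻¹ • (c • e - u')) e with hE₂
      set G₁ : Matrix k k ℝ := 1 + E₁ with hG₁
      set G₂ : Matrix k k ℝ := 1 + E₂ with hG₂
      set G := G₂ * G₁ with hG
      -- determinant of G
      have hdetG₁ : G₁.det = w i₀ := by
        rw [hG₁, hE₁, det_one_add_vecMulVec, he_dotr]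
        simp [he_def]
      have hdetG₂ : G₂.det = 1 := by
        rw [hG₂, hE₂, det_one_add_vecMulVec, he_dotl]
        simp only [Pi.smul_apply, Pi.sub_apply, he_def, Pi.single_eq_same, smul_eq_mul]
        rw [hu'i₀]
        simp
      have hdetG : G.det = w i₀ := by
        rw [hG, det_mul, hdetG₁, hdetG₂, one_mul]
      have hdetGne : G.det ≠ 0 := by rw [hdetG]; exact hi₀
      -- G *ᵥ u = c • e
      have hGu : G *ᵥ u = c • e := by
        rw [hG, ← mulVec_mulVec]
        have h1 : G₁ *ᵥ u = u' := by
          rw [hG₁, add_mulVec, one_mulVec, hE₁, _root_.vecMulVec_mulVec]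
          have h1a : (w - e) ⬝ᵥ u = c - u i₀ := by
            rw [sub_dotProduct, he_dotl, dotProduct_comm, ← hc_def]
          rw [h1a, hu'_def]
        rw [h1, hG₂, add_mulVec, one_mulVec, hE₂, _root_.vecMulVec_mulVec, he_dotl, hu'i₀,
          smul_smul, mul_inv_cancel₀ hc, one_smul]
        abel
      -- e ᵥ* G = w
      have heG : e ᵥ* G = w := by
        rw [hG, ← vecMul_vecMul]
        have h1 : e ᵥ* G₂ = e := by
          rw [hG₂, vecMul_add, vecMul_one, hE₂, _root_.vecMul_vecMulVec]
          have h1a : e ⬝ᵥ c⁻¹ • (c • e - u') = 0 := by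
            rw [he_dotl]
            simp only [Pi.smul_apply, Pi.sub_apply, he_def, Pi.single_eq_same, smul_eq_mul]
            rw [hu'i₀]
            simp
          rw [h1a, zero_smul, add_zero]
        rw [h1, hG₁, vecMul_add, vecMul_one, hE₁, _root_.vecMul_vecMulVec, he_dotr]
        have : e i₀ = 1 := by simp [he_def]
        rw [this, one_smul]
        abel
      -- the conjugated upper-left block
      set B' := G * B * Gᵀ with hB'_def
      have hB'skew : B'ᵀ = -B' := by
        simp [hB'_def, hB, Matrix.mul_assoc, Matrix.mul_neg, Matrix.neg_mul]
      have hwB : w ᵥ* B = 0 := by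
        rw [← mulVec_transpose, hB, neg_mulVec, hBw, neg_zero]
      have heB' : e ᵥ* B' = 0 := by
        rw [hB'_def, ← vecMul_vecMul, ← vecMul_vecMul, heG, hwB, zero_vecMul]
      have hrow : ∀ j, B' i₀ j = 0 := by
        intro j
        have h := congrFun heB' j
        simpa [he_def] using h
      have hcol : ∀ i, B' i i₀ = 0 := by
        intro i
        have h := congrFun (congrFun hB'skew i₀) i
        simp only [Matrix.transpose_apply, Matrix.neg_apply] at h
        rw [h, hrow, neg_zero]
      -- the congruence
      set P : Matrix (k ⊕ l) (k ⊕ l) ℝ := fromBlocks G 0 0 (1 : Matrix l l ℝ) with hP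
      have hPT : Pᵀ = fromBlocks Gᵀ 0 0 (1 : Matrix l l ℝ) := by
        rw [hP, fromBlocks_transpose, transpose_zero, transpose_zero, transpose_one]
      have hPdet : P.det = G.det := by
        rw [hP, det_fromBlocks_zero₂₁, det_one, mul_one]
      have hcong : ∀ B'' : Matrix k k ℝ,
          P * fromBlocks B'' (vecMulVec u v) (-vecMulVec v u) F * Pᵀ
          = fromBlocks (G * B'' * Gᵀ) (vecMulVec (c • e) v) (-(vecMulVec v (c • e))) F := by
        intro B''
        rw [hPT, hP, fromBlocks_multiply, fromBlocks_multiply]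
        simp only [Matrix.zero_mul, Matrix.mul_zero, Matrix.one_mul, Matrix.mul_one,
          add_zero, zero_add, Matrix.neg_mul, Matrix.mul_assoc]
        rw [_root_.mul_vecMulVec, _root_.vecMulVec_mul, vecMul_transpose, hGu]
      have hdetcong : ∀ B'' : Matrix k k ℝ,
          (fromBlocks (G * B'' * Gᵀ) (vecMulVec (c • e) v) (-(vecMulVec v (c • e))) F).det
          = G.det * G.det *
            (fromBlocks B'' (vecMulVec u v) (-vecMulVec v u) F).det := by
        intro B''
        rw [← hcong B'', det_mul, det_mul, det_transpose, hPdet]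
        ring
      -- decoupling
      set p : k ⊕ l → Prop := fun x => Sum.elim (fun i => i ≠ i₀) (fun _ => False) x with hp
      have hdec : ∀ B'' : Matrix k k ℝ, (∀ jj, B'' i₀ jj = 0) → (∀ ii, B'' ii i₀ = 0) →
          (fromBlocks B'' (vecMulVec (c • e) v) (-(vecMulVec v (c • e))) F).det
          = ((fromBlocks B'' (vecMulVec (c • e) v) (-(vecMulVec v (c • e))) F).submatrix
              (Subtype.val : {x // p x} → k ⊕ l) Subtype.val).det *
            ((fromBlocks B'' (vecMulVec (c • e) v) (-(vecMulVec v (c • e))) F).submatrix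
              (Subtype.val : {x // ¬ p x} → k ⊕ l) Subtype.val).det := by
        intro B'' hr hcl
        apply det_decouple
        · rintro (i | i) (j | j) hi hj
          · have hj' : j = i₀ := by simpa [hp] using hj
            subst hj'
            exact hcl i
          · have hi' : i ≠ i₀ := by simpa [hp] using hi
            simp [fromBlocks, vecMulVec_apply, he_def, Pi.single_apply, hi']
          · exact absurd hi (by simp [hp])
          · exact absurd hi (by simp [hp])
        · rintro (i | i) (j | j) hi hj
          · have hi' : i = i₀ := by simpa [hp] using hi
            subst hi'
            exact hr j
          · exact absurd hj (by simp [hp])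
          · have hj' : j ≠ i₀ := by simpa [hp] using hj
            simp [fromBlocks, vecMulVec_apply, he_def, Pi.single_apply, hj']
          · exact absurd hj (by simp [hp])
      have hrow' : ∀ jj, (-B') i₀ jj = 0 := fun jj => by
        simp [Matrix.neg_apply, hrow]
      have hcol' : ∀ ii, (-B') ii i₀ = 0 := fun ii => by
        simp [Matrix.neg_apply, hcol]
      have hd1 := hdec B' hrow hcol
      have hd2 := hdec (-B') hrow' hcol'
      -- the two second factors agree
      have hfac2 : ((fromBlocks (-B') (vecMulVec (c • e) v) (-(vecMulVec v (c • e))) F).submatrix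
              (Subtype.val : {x // ¬ p x} → k ⊕ l) (Subtype.val : {x // ¬ p x} → k ⊕ l))
          = ((fromBlocks B' (vecMulVec (c • e) v) (-(vecMulVec v (c • e))) F).submatrix
              (Subtype.val : {x // ¬ p x} → k ⊕ l) (Subtype.val : {x // ¬ p x} → k ⊕ l)) := by
        ext x y
        obtain ⟨x, hx⟩ := x
        obtain ⟨y, hy⟩ := y
        cases x with
        | inl i =>
          have hi : i = i₀ := by simpa [hp] using hx
          cases y with
          | inl j =>
            have hj : j = i₀ := by simpa [hp] using hy
            simp [Matrix.submatrix_apply, fromBlocks, hi, hj, hrow]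
          | inr j => rfl
        | inr i => cases y with
          | inl j => rfl
          | inr j => rfl
      -- the two first factors : negation of a skew matrix
      have hfac1skew : (((fromBlocks B' (vecMulVec (c • e) v) (-(vecMulVec v (c • e))) F).submatrix
              (Subtype.val : {x // p x} → k ⊕ l) (Subtype.val : {x // p x} → k ⊕ l)))ᵀ
          = -(((fromBlocks B' (vecMulVec (c • e) v) (-(vecMulVec v (c • e))) F).submatrix
              (Subtype.val : {x // p x} → k ⊕ l) (Subtype.val : {x // p x} → k ⊕ l))) := by
        ext x y
        obtain ⟨x, hx⟩ := x
        obtain ⟨y, hy⟩ := y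
        cases x with
        | inl i => cases y with
          | inl j =>
            have h := congrFun (congrFun hB'skew i) j
            simpa using h
          | inr j => exact absurd hy (by simp [hp])
        | inr i => exact absurd hx (by simp [hp])
      have hfac1 : ((fromBlocks (-B') (vecMulVec (c • e) v) (-(vecMulVec v (c • e))) F).submatrix
              (Subtype.val : {x // p x} → k ⊕ l) (Subtype.val : {x // p x} → k ⊕ l))
          = -(((fromBlocks B' (vecMulVec (c • e) v) (-(vecMulVec v (c • e))) F).submatrix
              (Subtype.val : {x // p x} → k ⊕ l) (Subtype.val : {x // p x} → k ⊕ l))) := by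
        ext x y
        obtain ⟨x, hx⟩ := x
        obtain ⟨y, hy⟩ := y
        cases x with
        | inl i => cases y with
          | inl j => simp [Matrix.submatrix_apply, fromBlocks]
          | inr j => exact absurd hy (by simp [hp])
        | inr i => exact absurd hx (by simp [hp])
      have hkeyeq : (fromBlocks B' (vecMulVec (c • e) v) (-(vecMulVec v (c • e))) F).det
          = (fromBlocks (-B') (vecMulVec (c • e) v) (-(vecMulVec v (c • e))) F).det := by
        rw [hd1, hd2, hfac1, hfac2, det_neg_skew _ hfac1skew]
      -- conclusion
      have h₁ := hdetcong B
      have h₂ := hdetcong (-B)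
      have hGnB : G * (-B) * Gᵀ = -B' := by
        rw [hB'_def, Matrix.mul_neg, Matrix.neg_mul]
      rw [hGnB] at h₂
      rw [hB'_def] at hkeyeq
      have hfinal : G.det * G.det *
            (fromBlocks B (vecMulVec u v) (-vecMulVec v u) F).det
          = G.det * G.det *
            (fromBlocks (-B) (vecMulVec u v) (-vecMulVec v u) F).det := by
        rw [← h₁, ← h₂]
        exact hkeyeq
      exact mul_left_cancel₀ (mul_ne_zero hdetGne hdetGne) hfinal

end Aux

theorem stmt_7 {n : ℕ} (A : Matrix (Fin n) (Fin n) ℝ) (hA : Aᵀ = -A)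
    (X : Finset (Fin n)) (hX : IsHLClan A X) :
    ∀ Y : Finset (Fin n), (pSub A Y).det = (pSub (MInv X A) Y).det := by
  classical
  intro Y
  obtain ⟨u₀, v₀, huv⟩ := rank_le_one_exists _ hX.1
  set U : Fin n → ℝ := fun i => if h : i ∈ X then u₀ ⟨i, h⟩ else 0 with hU
  set V : Fin n → ℝ := fun j => if h : j ∈ Xᶜ then v₀ ⟨j, h⟩ else 0 with hV
  have hUV : ∀ i j, i ∈ X → j ∉ X → A i j = U i * V j := by
    intro i j hi hj
    have hj' : j ∈ Xᶜ := Finset.mem_compl.mpr hj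
    have := huv ⟨i, hi⟩ ⟨j, hj'⟩
    simp only [oSub, Matrix.submatrix_apply] at this
    simp [hU, hV, hi, hj, hj', this]
  have hAskew : ∀ i j, A j i = - A i j := by
    intro i j
    have := congrFun (congrFun hA i) j
    simpa using this
  set p : ↥Y → Prop := fun y => (y : Fin n) ∈ X with hp
  set B : Matrix {y : ↥Y // p y} {y : ↥Y // p y} ℝ :=
    fun i j => A ((i : ↥Y) : Fin n) ((j : ↥Y) : Fin n) with hBdef
  set F : Matrix {y : ↥Y // ¬ p y} {y : ↥Y // ¬ p y} ℝ :=
    fun i j => A ((i : ↥Y) : Fin n) ((j : ↥Y) : Fin n) with hFdef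
  set u' : {y : ↥Y // p y} → ℝ := fun i => U ((i : ↥Y) : Fin n) with hu'def
  set v' : {y : ↥Y // ¬ p y} → ℝ := fun j => V ((j : ↥Y) : Fin n) with hv'def
  have hBskew : Bᵀ = -B := by
    ext i j
    simp only [Matrix.transpose_apply, Matrix.neg_apply, hBdef]
    exact hAskew _ _
  have h1 : (pSub A Y).submatrix (Equiv.sumCompl p) (Equiv.sumCompl p)
      = fromBlocks B (vecMulVec u' v') (-vecMulVec v' u') F := by
    ext i j
    cases i with
    | inl i =>
      cases j with
      | inl j => rfl
      | inr j =>
        simp only [Matrix.submatrix_apply, Equiv.sumCompl_apply_inl, Equiv.sumCompl_apply_inr,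
          fromBlocks_apply₁₂, vecMulVec_apply, pSub]
        exact hUV _ _ i.2 j.2
    | inr i =>
      cases j with
      | inl j =>
        simp only [Matrix.submatrix_apply, Equiv.sumCompl_apply_inl, Equiv.sumCompl_apply_inr,
          fromBlocks_apply₂₁, Matrix.neg_apply, vecMulVec_apply, pSub]
        rw [hAskew, hUV _ _ j.2 i.2]
        ring
      | inr j => rfl
  have h2 : (pSub (MInv X A) Y).submatrix (Equiv.sumCompl p) (Equiv.sumCompl p)
      = fromBlocks (-B) (vecMulVec u' v') (-vecMulVec v' u') F := by
    ext i j
    cases i with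
    | inl i =>
      cases j with
      | inl j =>
        simp only [Matrix.submatrix_apply, Equiv.sumCompl_apply_inl,
          fromBlocks_apply₁₁, Matrix.neg_apply, pSub, MInv, hBdef]
        rw [if_pos ⟨i.2, j.2⟩]
        rfl
      | inr j =>
        simp only [Matrix.submatrix_apply, Equiv.sumCompl_apply_inl, Equiv.sumCompl_apply_inr,
          fromBlocks_apply₁₂, vecMulVec_apply, pSub, MInv]
        rw [if_neg (fun h => j.2 h.2)]
        exact hUV _ _ i.2 j.2
    | inr i =>
      cases j with
      | inl j =>
        simp only [Matrix.submatrix_apply, Equiv.sumCompl_apply_inl, Equiv.sumCompl_apply_inr,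
          fromBlocks_apply₂₁, Matrix.neg_apply, vecMulVec_apply, pSub, MInv]
        rw [if_neg (fun h => i.2 h.1)]
        rw [hAskew, hUV _ _ j.2 i.2]
        ring
      | inr j =>
        simp only [Matrix.submatrix_apply, Equiv.sumCompl_apply_inr,
          fromBlocks_apply₂₂, pSub, MInv, hFdef]
        rw [if_neg (fun h => i.2 h.1)]
        rfl
  rw [← det_submatrix_equiv_self (Equiv.sumCompl p) (pSub A Y),
    ← det_submatrix_equiv_self (Equiv.sumCompl p) (pSub (MInv X A) Y), h1, h2]
  exact key_blocks B hBskew u' v' F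
end

section
/- Let A be a skew-symmetric n×n block matrix A = [[A₁₁, A₁₂],[-A₁₂ᵗ, A₂₂]] with A₁₁, A₂₂ square, and let B = [[-A₁₁, A₁₂],[-A₁₂ᵗ, A₂₂]]. If rank(A₁₂) ≤ 1, then A and B have equal corresponding principal minors of all orders. -/
open Matrix

set_option maxRecDepth 4000

open Polynomial

namespace SkewHelp

variable {m n k : Type*}

lemma vecMulVec_transpose' (u : m → ℝ) (v : n → ℝ) :
    (vecMulVec u v)ᵀ = vecMulVec v u := by
  ext i j; simp [vecMulVec_apply, mul_comm]

lemma vecMulVec_mul' [Fintype n] (u : m → ℝ) (v : n → ℝ) (N : Matrix n k ℝ) :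
    vecMulVec u v * N = vecMulVec u (v ᵥ* N) := by
  ext i j
  simp [mul_apply, vecMulVec_apply, vecMul, dotProduct, Finset.mul_sum, mul_assoc]

lemma mul_vecMulVec' [Fintype m] (N : Matrix k m ℝ) (u : m → ℝ) (v : n → ℝ) :
    N * vecMulVec u v = vecMulVec (N *ᵥ u) v := by
  ext i j
  simp [mul_apply, vecMulVec_apply, mulVec, dotProduct, Finset.sum_mul, mul_assoc]

lemma vecMulVec_mulVec' [Fintype n] (u : m → ℝ) (v : n → ℝ) (w : n → ℝ) :
    vecMulVec u v *ᵥ w = (v ⬝ᵥ w) • u := by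
  ext i
  simp [mulVec, vecMulVec_apply, dotProduct, Finset.mul_sum, Finset.sum_mul, mul_assoc,
    mul_comm, mul_left_comm]

lemma vecMul_vecMulVec' [Fintype m] (x : m → ℝ) (u : m → ℝ) (v : n → ℝ) :
    x ᵥ* vecMulVec u v = (x ⬝ᵥ u) • v := by
  ext j
  simp [vecMul, vecMulVec_apply, dotProduct, Finset.sum_mul, mul_assoc]

lemma vecMulVec_zero_right (u : m → ℝ) : vecMulVec u (0 : n → ℝ) = 0 := by
  ext i j; simp [vecMulVec_apply]

lemma vecMulVec_zero_left (v : n → ℝ) : vecMulVec (0 : m → ℝ) v = 0 := by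
  ext i j; simp [vecMulVec_apply]

lemma vecMulVec_smul_right (u : m → ℝ) (a : ℝ) (v : n → ℝ) :
    vecMulVec u (a • v) = a • vecMulVec u v := by
  ext i j; simp [vecMulVec_apply]; ring

lemma vecMulVec_smul_left (a : ℝ) (u : m → ℝ) (v : n → ℝ) :
    vecMulVec (a • u) v = a • vecMulVec u v := by
  ext i j; simp [vecMulVec_apply]; ring

lemma vecMulVec_add_right (u : m → ℝ) (v v' : n → ℝ) :
    vecMulVec u (v + v') = vecMulVec u v + vecMulVec u v' := by
  ext i j; simp [vecMulVec_apply]; ring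

lemma vecMulVec_add_left (u u' : m → ℝ) (v : n → ℝ) :
    vecMulVec (u + u') v = vecMulVec u v + vecMulVec u' v := by
  ext i j; simp [vecMulVec_apply]; ring

lemma skew_dot [Fintype m] {S : Matrix m m ℝ} (hS : Sᵀ = -S) (x : m → ℝ) :
    x ⬝ᵥ (S *ᵥ x) = 0 := by
  have h1 : x ⬝ᵥ (S *ᵥ x) = (x ᵥ* S) ⬝ᵥ x := dotProduct_mulVec x S x
  have h2 : x ᵥ* S = -(S *ᵥ x) := by
    rw [← mulVec_transpose, hS, neg_mulVec]
  rw [h2, neg_dotProduct, dotProduct_comm (S *ᵥ x) x] at h1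
  linarith

lemma skew_det_odd [Fintype m] [DecidableEq m] (h : Odd (Fintype.card m))
    {A : Matrix m m ℝ} (hA : Aᵀ = -A) : A.det = 0 := by
  have h1 : A.det = (-A).det := by rw [← hA, det_transpose]
  rw [det_neg, h.neg_one_pow] at h1
  linarith

lemma eval_charpoly' [Fintype n] [DecidableEq n] (M : Matrix n n ℝ) (x : ℝ) :
    (M.charpoly).eval x = (x • (1 : Matrix n n ℝ) - M).det := by
  rw [Matrix.charpoly, ← coe_evalRingHom, RingHom.map_det]
  congr 1
  ext i j
  by_cases h : i = j
  · subst h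
    simp [Matrix.map_apply, Matrix.charmatrix_apply_eq, Matrix.sub_apply, Matrix.smul_apply,
      Matrix.one_apply_eq]
  · simp [Matrix.map_apply, Matrix.charmatrix_apply_ne _ _ _ h, Matrix.sub_apply, Matrix.smul_apply,
      Matrix.one_apply_ne h]


lemma det_blocks_isUnit [Fintype m] [Fintype n] [DecidableEq m] [DecidableEq n]
    (A : Matrix m m ℝ) (C : Matrix n n ℝ) (u : m → ℝ) (v : n → ℝ)
    (hC : Cᵀ = -C) (hCd : IsUnit C.det) :
    (fromBlocks A (vecMulVec u v) (-(vecMulVec u v)ᵀ) C).det = C.det * A.det := by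
  haveI : Invertible C := C.invertibleOfIsUnitDet hCd
  have hCinv : (⅟C)ᵀ = -(⅟C) := by
    rw [invOf_eq_nonsing_inv, transpose_nonsing_inv, hC]
    apply Matrix.inv_eq_right_inv
    rw [neg_mul_neg, Matrix.mul_nonsing_inv C hCd]
  rw [det_fromBlocks₂₂]
  have hz : vecMulVec u v * ⅟C * (-(vecMulVec u v)ᵀ) = 0 := by
    rw [vecMulVec_transpose', Matrix.mul_neg, vecMulVec_mul', vecMulVec_mul', vecMul_vecMulVec']
    have : (v ᵥ* ⅟C) ⬝ᵥ v = 0 := by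
      rw [← dotProduct_mulVec]
      exact skew_dot hCinv v
    rw [this, zero_smul, vecMulVec_zero_right, neg_zero]
  rw [hz, sub_zero]

lemma exists_skew_unit [Fintype n] [DecidableEq n] (hn : Even (Fintype.card n)) :
    ∃ J : Matrix n n ℝ, Jᵀ = -J ∧ IsUnit J.det := by
  obtain ⟨r, hr⟩ := hn
  have hcard : Fintype.card n = Fintype.card (Fin r ⊕ Fin r) := by
    simp [Fintype.card_sum, hr]
  let e : n ≃ Fin r ⊕ Fin r := Fintype.equivOfCardEq hcard
  let J0 : Matrix (Fin r ⊕ Fin r) (Fin r ⊕ Fin r) ℝ := fromBlocks 0 1 (-1) 0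
  have hJ0t : J0ᵀ = -J0 := by
    simp [J0, fromBlocks_transpose, fromBlocks_neg]
  have hJ0d : J0.det * J0.det = 1 := by
    rw [← det_mul]
    have : J0 * J0 = -(1 : Matrix (Fin r ⊕ Fin r) (Fin r ⊕ Fin r) ℝ) := by
      simp [J0, fromBlocks_multiply, ← fromBlocks_one, fromBlocks_neg]
    rw [this, det_neg, det_one, mul_one, Even.neg_one_pow]
    simp [Fintype.card_sum, Even.add_self]
  refine ⟨J0.submatrix e e, ?_, ?_⟩
  · rw [transpose_submatrix, hJ0t]
    ext i j; simp
  · rw [det_submatrix_equiv_self]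
    exact IsUnit.of_mul_eq_one _ hJ0d

lemma even_even_case [Fintype m] [Fintype n] [DecidableEq m] [DecidableEq n]
    (A : Matrix m m ℝ) (C : Matrix n n ℝ) (u : m → ℝ) (v : n → ℝ)
    (hA : Aᵀ = -A) (hC : Cᵀ = -C)
    (hm : Even (Fintype.card m)) (hn : Even (Fintype.card n)) :
    (fromBlocks A (vecMulVec u v) (-(vecMulVec u v)ᵀ) C).det =
    (fromBlocks (-A) (vecMulVec u v) (-(vecMulVec u v)ᵀ) C).det := by
  obtain ⟨J, hJ, hJu⟩ := exists_skew_unit hn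
  -- the set of bad ε is finite
  have hSfin : {ε : ℝ | ¬ IsUnit (C + ε • J).det}.Finite := by
    have hkey : ∀ ε : ℝ, (C + ε • J).det = ((-(C * J⁻¹)).charpoly).eval ε * J.det := by
      intro ε
      have h1 : C + ε • J = (ε • 1 + C * J⁻¹) * J := by
        rw [add_mul, smul_mul_assoc, one_mul, Matrix.nonsing_inv_mul_cancel_right _ _ hJu,
          add_comm]
      rw [h1, det_mul, eval_charpoly', sub_neg_eq_add]
    refine Set.Finite.subset (Polynomial.finite_setOf_isRoot
      (Matrix.charpoly_monic (-(C * J⁻¹))).ne_zero) ?_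
    intro ε hε
    simp only [Set.mem_setOf_eq] at hε ⊢
    by_contra hroot
    apply hε
    rw [isUnit_iff_ne_zero, hkey]
    exact mul_ne_zero hroot (hJu.ne_zero)
  -- polynomial equality
  set B0 := vecMulVec u v with hB0
  let F : Matrix m m ℝ → ℝ[X] := fun A' =>
    (fromBlocks (A'.map Polynomial.C) (B0.map Polynomial.C) ((-B0ᵀ).map Polynomial.C)
      (C.map Polynomial.C + (X : ℝ[X]) • J.map Polynomial.C)).det
  have heval : ∀ (A' : Matrix m m ℝ) (ε : ℝ),
      (F A').eval ε = (fromBlocks A' B0 (-B0ᵀ) (C + ε • J)).det := by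
    intro A' ε
    show (Polynomial.evalRingHom ε) (F A') = _
    rw [RingHom.map_det, RingHom.mapMatrix_apply]
    show ((fromBlocks _ _ _ _).map _).det = _
    rw [Matrix.fromBlocks_map]
    congr 1
    ext i j
    rcases i with i | i <;> rcases j with j | j <;>
      simp only [Matrix.fromBlocks_apply₁₁, Matrix.fromBlocks_apply₁₂, Matrix.fromBlocks_apply₂₁,
        Matrix.fromBlocks_apply₂₂, Matrix.map_apply, Matrix.add_apply, Matrix.smul_apply,
        smul_eq_mul, Polynomial.coe_evalRingHom, Polynomial.eval_add, Polynomial.eval_mul,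
        Polynomial.eval_X, Polynomial.eval_C, Matrix.neg_apply, Matrix.transpose_apply,
        Polynomial.eval_neg] <;> ring
  have hP : F A - F (-A) = 0 := by
    apply Polynomial.eq_zero_of_infinite_isRoot
    apply Set.Infinite.mono (s := {ε : ℝ | ¬ IsUnit (C + ε • J).det}ᶜ)
    · intro ε hε
      simp only [Set.mem_compl_iff, Set.mem_setOf_eq, not_not] at hε
      have hCε : (C + ε • J)ᵀ = -(C + ε • J) := by
        rw [transpose_add, transpose_smul, hC, hJ, smul_neg, neg_add]
      simp only [Set.mem_setOf_eq, IsRoot, eval_sub, heval]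
      rw [hB0, det_blocks_isUnit A _ u v hCε hε, det_blocks_isUnit (-A) _ u v hCε hε,
        det_neg, hm.neg_one_pow, one_mul, sub_self]
    · exact hSfin.infinite_compl
  have h0 := congrArg (Polynomial.eval 0) hP
  rw [eval_sub, eval_zero, sub_eq_zero, heval, heval] at h0
  simpa using h0

lemma skew_fromBlocks [Fintype m] [Fintype n] [DecidableEq m] [DecidableEq n]
    {A : Matrix m m ℝ} {C : Matrix n n ℝ} (u : m → ℝ) (v : n → ℝ)
    (hA : Aᵀ = -A) (hC : Cᵀ = -C) :
    (fromBlocks A (vecMulVec u v) (-(vecMulVec u v)ᵀ) C)ᵀ =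
      -(fromBlocks A (vecMulVec u v) (-(vecMulVec u v)ᵀ) C) := by
  rw [fromBlocks_transpose, transpose_neg, transpose_transpose, hA, hC, Matrix.fromBlocks_neg,
    neg_neg]

theorem keyLemma [Fintype m] [Fintype n] [DecidableEq m] [DecidableEq n]
    (A : Matrix m m ℝ) (C : Matrix n n ℝ) (u : m → ℝ) (v : n → ℝ)
    (hA : Aᵀ = -A) (hC : Cᵀ = -C) :
    (fromBlocks A (vecMulVec u v) (-(vecMulVec u v)ᵀ) C).det =
    (fromBlocks (-A) (vecMulVec u v) (-(vecMulVec u v)ᵀ) C).det := by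
  have hA' : (-A)ᵀ = -(-A) := by rw [transpose_neg, hA]
  rcases Nat.even_or_odd (Fintype.card m) with hm | hm
  · rcases Nat.even_or_odd (Fintype.card n) with hn | hn
    · exact even_even_case A C u v hA hC hm hn
    · -- total size odd : both determinants vanish
      have hodd : Odd (Fintype.card (m ⊕ n)) := by
        rw [Fintype.card_sum]; exact hm.add_odd hn
      rw [skew_det_odd hodd (skew_fromBlocks u v hA hC),
        skew_det_odd hodd (skew_fromBlocks u v hA' hC)]
  · -- card m odd : kernel argument
    have hdet : A.det = 0 := skew_det_odd hm hA
    obtain ⟨w, hw0, hw⟩ := (Matrix.exists_mulVec_eq_zero_iff).2 hdet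
    have hwA : w ᵥ* A = 0 := by
      rw [← mulVec_transpose, hA, neg_mulVec, hw, neg_zero]
    have hwA2 : w ᵥ* (-A) = 0 := by rw [vecMul_neg, hwA, neg_zero]
    have hAw2 : (-A) *ᵥ w = 0 := by rw [neg_mulVec, hw, neg_zero]
    set B0 := vecMulVec u v with hB0
    by_cases hc : u ⬝ᵥ w = 0
    · have hker : ∀ A' : Matrix m m ℝ, A' *ᵥ w = 0 →
          (fromBlocks A' B0 (-B0ᵀ) C).det = 0 := by
        intro A' hA'w
        rw [← Matrix.exists_mulVec_eq_zero_iff]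
        refine ⟨Sum.elim w 0, ?_, ?_⟩
        · intro h
          apply hw0
          ext i
          exact congrFun h (Sum.inl i)
        · rw [fromBlocks_mulVec]
          rw [hB0, vecMulVec_transpose']
          simp [hA'w, neg_mulVec, vecMulVec_mulVec', hc]
      rw [hker A hw, hker (-A) hAw2]
    · set c := u ⬝ᵥ w with hcdef
      set s := w ⬝ᵥ w with hsdef
      have hs : s ≠ 0 := fun h => hw0 ((dotProduct_self_eq_zero).1 h)
      set x : m → ℝ := c⁻¹ • (w - u) with hx
      have hucx : u + c • x = w := by
        funext i
        simp only [hx, Pi.add_apply, Pi.smul_apply, Pi.sub_apply, smul_eq_mul]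
        rw [← mul_assoc, mul_inv_cancel₀ hc, one_mul]
        ring
      have hwx : w ⬝ᵥ x = c⁻¹ * s - 1 := by
        rw [hx, dotProduct_smul, smul_eq_mul, dotProduct_sub, ← hsdef,
          dotProduct_comm w u, ← hcdef, mul_sub]
        rw [inv_mul_cancel₀ hc]
      set L1 : Matrix m m ℝ := 1 + vecMulVec x w with hL1
      set R1 : Matrix m m ℝ := 1 + vecMulVec w x with hR1
      have hdetL1 : L1.det = c⁻¹ * s := by
        rw [hL1, vecMulVec_eq Unit, det_one_add_replicateCol_mul_replicateRow, hwx]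
        ring
      have hdetR1 : R1.det = c⁻¹ * s := by
        rw [hR1, vecMulVec_eq Unit, det_one_add_replicateCol_mul_replicateRow, dotProduct_comm, hwx]
        ring
      have hfac : c⁻¹ * s ≠ 0 := mul_ne_zero (inv_ne_zero hc) hs
      have hL1A : ∀ A' : Matrix m m ℝ, w ᵥ* A' = 0 → L1 * A' = A' := by
        intro A' h
        rw [hL1, add_mul, one_mul, vecMulVec_mul', h, vecMulVec_zero_right, add_zero]
      have hAR1 : ∀ A' : Matrix m m ℝ, A' *ᵥ w = 0 → A' * R1 = A' := by
        intro A' h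
        rw [hR1, mul_add, mul_one, mul_vecMulVec', h, vecMulVec_zero_left, add_zero]
      have hL1B : L1 * B0 = vecMulVec w v := by
        rw [hL1, Matrix.add_mul, Matrix.one_mul, hB0, vecMulVec_mul', vecMul_vecMulVec',
          dotProduct_comm w u, ← hcdef, vecMulVec_smul_right, ← vecMulVec_smul_left,
          ← vecMulVec_add_left, hucx]
      have hBR1 : B0ᵀ * R1 = vecMulVec v w := by
        rw [hB0, vecMulVec_transpose', hR1, Matrix.mul_add, Matrix.mul_one, vecMulVec_mul',
          vecMul_vecMulVec', ← hcdef, ← vecMulVec_add_right, hucx]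
      have main : ∀ A' : Matrix m m ℝ, A' *ᵥ w = 0 → w ᵥ* A' = 0 →
          (fromBlocks L1 0 0 (1 : Matrix n n ℝ)) * fromBlocks A' B0 (-B0ᵀ) C *
            (fromBlocks R1 0 0 (1 : Matrix n n ℝ)) =
          fromBlocks A' (vecMulVec w v) (-(vecMulVec v w)) C := by
        intro A' h1 h2
        rw [fromBlocks_multiply, fromBlocks_multiply]
        simp only [Matrix.zero_mul, Matrix.mul_zero, add_zero, zero_add, Matrix.one_mul,
          Matrix.mul_one, Matrix.mul_neg, Matrix.neg_mul, neg_zero]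
        rw [hL1A A' h2, hL1B, hAR1 A' h1, hBR1]
      have hdetmain : ∀ A' : Matrix m m ℝ, A' *ᵥ w = 0 → w ᵥ* A' = 0 →
          (c⁻¹ * s) * (fromBlocks A' B0 (-B0ᵀ) C).det * (c⁻¹ * s) =
          (fromBlocks A' (vecMulVec w v) (-(vecMulVec v w)) C).det := by
        intro A' h1 h2
        have := congrArg Matrix.det (main A' h1 h2)
        simp only [det_mul, det_fromBlocks_zero₂₁, det_one, hdetL1, hdetR1,
          mul_one] at this
        linear_combination this
      -- final reflection step
      set x' : m → ℝ := (-2 * s⁻¹) • w with hx'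
      set K : Matrix m m ℝ := 1 + vecMulVec x' w with hK
      have hKA : K * (-A) = -A := by
        rw [hK, add_mul, one_mul, vecMulVec_mul', hwA2, vecMulVec_zero_right, add_zero]
      have hKB : K * vecMulVec w v = -(vecMulVec w v) := by
        rw [hK, Matrix.add_mul, Matrix.one_mul, vecMulVec_mul', vecMul_vecMulVec', ← hsdef, hx',
          vecMulVec_smul_right, ← vecMulVec_smul_left, smul_smul]
        have : s * (-2 * s⁻¹) = -2 := by field_simp
        rw [this]
        have h2 : vecMulVec ((-2 : ℝ) • w) v = (-2 : ℝ) • vecMulVec w v :=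
          vecMulVec_smul_left _ _ _
        rw [h2]
        ext i j
        simp [Matrix.add_apply, Matrix.smul_apply, Matrix.neg_apply]
        ring
      have hGmul : (fromBlocks (-K) 0 0 (1 : Matrix n n ℝ)) *
          fromBlocks (-A) (vecMulVec w v) (-(vecMulVec v w)) C =
          fromBlocks A (vecMulVec w v) (-(vecMulVec v w)) C := by
        rw [fromBlocks_multiply]
        simp only [Matrix.zero_mul, Matrix.mul_zero, add_zero, zero_add, Matrix.one_mul,
          Matrix.neg_mul]
        rw [hKA, hKB, neg_neg, neg_neg]
      have hdetK : (fromBlocks (-K) 0 0 (1 : Matrix n n ℝ)).det = 1 := by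
        rw [det_fromBlocks_zero₂₁, det_one, mul_one, det_neg]
        have hdK : K.det = -1 := by
          rw [hK, vecMulVec_eq Unit, det_one_add_replicateCol_mul_replicateRow, hx', dotProduct_smul,
            smul_eq_mul, ← hsdef]
          field_simp
          ring
        rw [hdK, hm.neg_one_pow]
        ring
      have hfinal : (fromBlocks A (vecMulVec w v) (-(vecMulVec v w)) C).det =
          (fromBlocks (-A) (vecMulVec w v) (-(vecMulVec v w)) C).det := by
        have := congrArg Matrix.det hGmul
        rw [det_mul, hdetK, one_mul] at this
        exact this.symm
      have e1 := hdetmain A hw hwA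
      have e2 := hdetmain (-A) hAw2 hwA2
      rw [hfinal, ← e2] at e1
      have e3 := mul_right_cancel₀ hfac e1
      exact mul_left_cancel₀ hfac e3

lemma exists_dyadic {k l : Type*} [Fintype k] [Fintype l] [DecidableEq l]
    (A : Matrix k l ℝ) (h : A.rank ≤ 1) :
    ∃ (u : k → ℝ) (v : l → ℝ), A = vecMulVec u v := by
  have h1 : Module.finrank ℝ (LinearMap.range A.mulVecLin) ≤ 1 := h
  have hP : (LinearMap.range A.mulVecLin).IsPrincipal :=
    (Submodule.finrank_le_one_iff_isPrincipal _).mp h1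
  obtain ⟨u, hu⟩ := hP.principal
  have hcol : ∀ j, (fun i => A i j) ∈ LinearMap.range A.mulVecLin := by
    intro j
    exact ⟨Pi.single j 1, by ext i; simp [Matrix.mulVecLin_apply, Matrix.mulVec_single]⟩
  choose v hv using fun j => Submodule.mem_span_singleton.mp (hu ▸ hcol j)
  refine ⟨u, v, ?_⟩
  ext i j
  have := congrFun (hv j) i
  simp only [Pi.smul_apply, smul_eq_mul] at this
  rw [vecMulVec_apply, ← this, mul_comm]

end SkewHelp


theorem stmt_8 {p q : ℕ} (A11 : Matrix (Fin p) (Fin p) ℝ) (A22 : Matrix (Fin q) (Fin q) ℝ)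
    (A12 : Matrix (Fin p) (Fin q) ℝ) (h11 : A11ᵀ = -A11) (h22 : A22ᵀ = -A22)
    (hr : A12.rank ≤ 1) :
    ∀ Y : Finset (Fin p ⊕ Fin q),
      (pSub (Matrix.fromBlocks A11 A12 (-A12ᵀ) A22) Y).det =
        (pSub (Matrix.fromBlocks (-A11) A12 (-A12ᵀ) A22) Y).det := by
  simp only [pSub]
  classical
  obtain ⟨u0, v0, huv⟩ := SkewHelp.exists_dyadic A12 hr
  subst huv
  intro Y
  let e : {x : Fin p ⊕ Fin q // x ∈ Y} ≃
      {i : Fin p // Sum.inl i ∈ Y} ⊕ {j : Fin q // Sum.inr j ∈ Y} :=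
    Equiv.subtypeSum
  rw [← det_submatrix_equiv_self e.symm, ← det_submatrix_equiv_self e.symm]
  have hsub : ∀ (A11' : Matrix (Fin p) (Fin p) ℝ),
      (((fromBlocks A11' (vecMulVec u0 v0) (-(vecMulVec u0 v0)ᵀ) A22).submatrix
          (fun i : Y => (i : Fin p ⊕ Fin q)) (fun j : Y => (j : Fin p ⊕ Fin q))).submatrix
        e.symm e.symm) =
      fromBlocks (A11'.submatrix (fun i : {i : Fin p // Sum.inl i ∈ Y} => i.1)
          (fun i : {i : Fin p // Sum.inl i ∈ Y} => i.1))
        (vecMulVec (fun i : {i : Fin p // Sum.inl i ∈ Y} => u0 i.1)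
          (fun j : {j : Fin q // Sum.inr j ∈ Y} => v0 j.1))
        (-(vecMulVec (fun i : {i : Fin p // Sum.inl i ∈ Y} => u0 i.1)
          (fun j : {j : Fin q // Sum.inr j ∈ Y} => v0 j.1))ᵀ)
        (A22.submatrix (fun j : {j : Fin q // Sum.inr j ∈ Y} => j.1)
          (fun j : {j : Fin q // Sum.inr j ∈ Y} => j.1)) := by
    intro A11'
    ext a b
    rcases a with i | i <;> rcases b with j | j <;>
      simp [e, Equiv.subtypeSum, Matrix.submatrix_apply, vecMulVec_apply,
        SkewHelp.vecMulVec_transpose']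
  rw [hsub A11, hsub (-A11)]
  have h11' : ((A11.submatrix (fun i : {i : Fin p // Sum.inl i ∈ Y} => i.1)
      (fun i : {i : Fin p // Sum.inl i ∈ Y} => i.1)))ᵀ =
      -((A11.submatrix (fun i : {i : Fin p // Sum.inl i ∈ Y} => i.1)
      (fun i : {i : Fin p // Sum.inl i ∈ Y} => i.1))) := by
    rw [transpose_submatrix, h11]
    rfl
  have h22' : ((A22.submatrix (fun j : {j : Fin q // Sum.inr j ∈ Y} => j.1)
      (fun j : {j : Fin q // Sum.inr j ∈ Y} => j.1)))ᵀ =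
      -((A22.submatrix (fun j : {j : Fin q // Sum.inr j ∈ Y} => j.1)
      (fun j : {j : Fin q // Sum.inr j ∈ Y} => j.1))) := by
    rw [transpose_submatrix, h22]
    rfl
  have key := SkewHelp.keyLemma (A11.submatrix (fun i : {i : Fin p // Sum.inl i ∈ Y} => i.1)
      (fun i : {i : Fin p // Sum.inl i ∈ Y} => i.1))
    (A22.submatrix (fun j : {j : Fin q // Sum.inr j ∈ Y} => j.1)
      (fun j : {j : Fin q // Sum.inr j ∈ Y} => j.1))
    (fun i : {i : Fin p // Sum.inl i ∈ Y} => u0 i.1)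
    (fun j : {j : Fin q // Sum.inr j ∈ Y} => v0 j.1) h11' h22'
  have hneg : ((-A11).submatrix (fun i : {i : Fin p // Sum.inl i ∈ Y} => i.1)
      (fun i : {i : Fin p // Sum.inl i ∈ Y} => i.1)) =
      -(A11.submatrix (fun i : {i : Fin p // Sum.inl i ∈ Y} => i.1)
      (fun i : {i : Fin p // Sum.inl i ∈ Y} => i.1)) := rfl
  rw [hneg]
  exact key
end

section
/- If A and B are n×n skew-symmetric matrices that are diagonally similar, i.e., B = D⁻¹AD for some nonsingular diagonal matrix D, then b_ij = ±a_ij for all i,j, and D may be replaced by a {-1,1}-diagonal matrix D' with B = D'⁻¹AD'. -/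
open Matrix

theorem stmt_10 {n : ℕ} (A B : Matrix (Fin n) (Fin n) ℝ) (hA : Aᵀ = -A) (hB : Bᵀ = -B)
    (d : Fin n → ℝ) (hd : ∀ i, d i ≠ 0)
    (h : B = (Matrix.diagonal d)⁻¹ * A * Matrix.diagonal d) :
    (∀ i j, B i j = A i j ∨ B i j = -A i j) ∧
      ∃ d' : Fin n → ℝ, (∀ i, d' i = 1 ∨ d' i = -1) ∧
        B = (Matrix.diagonal d')⁻¹ * A * Matrix.diagonal d' := by
  have hinvD : (Matrix.diagonal d)⁻¹ = Matrix.diagonal (fun i => (d i)⁻¹) := by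
    apply Matrix.inv_eq_left_inv
    rw [Matrix.diagonal_mul_diagonal]
    have : (fun i => (d i)⁻¹ * d i) = fun _ : Fin n => (1 : ℝ) :=
      funext fun i => inv_mul_cancel₀ (hd i)
    rw [this]
    exact Matrix.diagonal_one
  have hentry : ∀ i j, B i j = (d i)⁻¹ * A i j * d j := by
    intro i j
    rw [h, hinvD, Matrix.mul_diagonal, Matrix.diagonal_mul]
  have hAsk : ∀ i j, A j i = -A i j := by
    intro i j
    have := congrFun (congrFun hA i) j
    simpa [Matrix.transpose_apply] using this
  have hBsk : ∀ i j, B j i = -B i j := by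
    intro i j
    have := congrFun (congrFun hB i) j
    simpa [Matrix.transpose_apply] using this
  have hkey : ∀ i j, A i j ≠ 0 → d j = d i ∨ d j = -d i := by
    intro i j hne
    have h1 : (d j)⁻¹ * A j i * d i = -((d i)⁻¹ * A i j * d j) := by
      rw [← hentry, ← hentry]; exact hBsk i j
    rw [hAsk i j] at h1
    have h2 : d i * d i * A i j = d j * d j * A i j := by
      field_simp [hd i, hd j] at h1
      linear_combination (-A i j) * h1
    have h3 : d i * d i = d j * d j := by
      have := mul_right_cancel₀ hne h2
      linarith [this]
    rcases mul_self_eq_mul_self_iff.mp h3.symm with h4 | h4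
    · exact Or.inl h4
    · exact Or.inr h4
  have hBval : ∀ i j, (A i j ≠ 0 → (d j = d i → B i j = A i j) ∧ (d j = -d i → B i j = -A i j)) := by
    intro i j _
    constructor
    · intro he
      rw [hentry, he]
      field_simp [hd i]
    · intro he
      rw [hentry, he]
      field_simp [hd i]
  refine ⟨?_, ?_⟩
  · intro i j
    by_cases hz : A i j = 0
    · left; rw [hentry, hz]; simp [hz]
    · rcases hkey i j hz with he | he
      · exact Or.inl ((hBval i j hz).1 he)
      · exact Or.inr ((hBval i j hz).2 he)
  · refine ⟨fun i => if d i < 0 then -1 else 1, fun i => by by_cases h : d i < 0 <;> simp [h], ?_⟩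
    set d' : Fin n → ℝ := fun i => if d i < 0 then -1 else 1 with hd'
    have hd'sq : ∀ i, d' i * d' i = 1 := by
      intro i; by_cases h : d i < 0 <;> simp [hd', h]
    have hinvD' : (Matrix.diagonal d')⁻¹ = Matrix.diagonal d' := by
      apply Matrix.inv_eq_left_inv
      rw [Matrix.diagonal_mul_diagonal]
      have : (fun i => d' i * d' i) = fun _ : Fin n => (1 : ℝ) := funext hd'sq
      rw [this]
      exact Matrix.diagonal_one
    rw [hinvD']
    ext i j
    rw [Matrix.mul_diagonal, Matrix.diagonal_mul]
    by_cases hz : A i j = 0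
    · rw [hentry, hz]; simp
    · rcases hkey i j hz with he | he
      · have hsame : d' j = d' i := by
          simp only [hd', he]
        rw [(hBval i j hz).1 he, hsame]
        calc A i j = d' i * d' i * A i j := by rw [hd'sq]; ring
          _ = d' i * A i j * d' i := by ring
      · have hopp : d' j = -d' i := by
          by_cases hcase : d i < 0
          · have : ¬ d j < 0 := by rw [he]; linarith
            simp [hd', hcase, this]
          · have hpos : 0 < d i := lt_of_le_of_ne (not_lt.mp hcase) (Ne.symm (hd i))
            have : d j < 0 := by rw [he]; linarith
            simp [hd', hcase, this]
        rw [(hBval i j hz).2 he, hopp]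
        calc -A i j = -(d' i * d' i) * A i j := by rw [hd'sq]; ring
          _ = d' i * A i j * -d' i := by ring
end

section
/- If A and B are n×n skew-symmetric matrices that are HL-clan-reversal-equivalent, then A and B have equal corresponding principal minors of all orders. -/
open Matrix

set_option linter.unusedSectionVars false
set_option linter.unusedVariables false

variable {m : Type*} [Fintype m] [DecidableEq m]



lemma det_skew_odd (M : Matrix m m ℝ) (h : Mᵀ = -M) (hodd : Odd (Fintype.card m)) :
    M.det = 0 := by
  have h1 : M.det = (-1 : ℝ) ^ Fintype.card m * M.det := by
    conv_lhs => rw [← Matrix.det_transpose M, h, Matrix.det_neg]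
  rw [hodd.neg_one_pow] at h1
  linarith

lemma det_zero_of_kernel (C : Matrix m m ℝ) (x : m → ℝ) (hx : x ≠ 0) (h : C *ᵥ x = 0) :
    C.det = 0 :=
  (Matrix.exists_mulVec_eq_zero_iff).mp ⟨x, hx, h⟩

lemma det_negRows (C : Matrix m m ℝ) (R : Finset m) :
    (Matrix.of fun i j => if i ∈ R then -C i j else C i j).det = (-1) ^ R.card * C.det := by
  have hD : (Matrix.of fun i j => if i ∈ R then -C i j else C i j)
      = Matrix.diagonal (fun i => if i ∈ R then (-1 : ℝ) else 1) * C := by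
    ext i j
    simp only [Matrix.of_apply, Matrix.diagonal_mul]
    split_ifs <;> ring
  rw [hD, Matrix.det_mul, Matrix.det_diagonal]
  congr 1
  rw [← Finset.prod_mul_prod_compl R]
  have h1 : ∏ i ∈ R, (if i ∈ R then (-1 : ℝ) else 1) = (-1) ^ R.card := by
    rw [Finset.prod_congr rfl (fun i hi => if_pos hi), Finset.prod_const]
  have h2 : ∏ i ∈ Rᶜ, (if i ∈ R then (-1 : ℝ) else 1) = 1 := by
    apply Finset.prod_eq_one
    intro i hi
    rw [if_neg (Finset.mem_compl.mp hi)]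
  rw [h1, h2, mul_one]

lemma updateRow_comm' (B : Matrix m m ℝ) {i j : m} (h : i ≠ j) (v w : m → ℝ) :
    updateRow (updateRow B i v) j w = updateRow (updateRow B j w) i v := by
  ext a b
  simp only [Matrix.updateRow_apply]
  split_ifs with h1 h2 <;> try rfl
  subst h1; subst h2; exact absurd rfl h

lemma exp4 (B : Matrix m m ℝ) {i0 j0 : m} (hij : i0 ≠ j0) (x y : m → ℝ) :
    (updateRow (updateRow B i0 (B i0 + x)) j0 (B j0 + y)).det
      = B.det + (updateRow B i0 x).det + (updateRow B j0 y).det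
        + (updateRow (updateRow B j0 y) i0 x).det := by
  set A := updateRow B i0 (B i0 + x) with hA
  have h1 : B j0 = A j0 := by rw [hA, Matrix.updateRow_ne hij.symm]
  have h2 : (updateRow A j0 (B j0 + y)).det = A.det + (updateRow A j0 y).det := by
    rw [h1, Matrix.det_updateRow_add, Matrix.updateRow_eq_self]
  have h3 : A.det = B.det + (updateRow B i0 x).det := by
    rw [hA]
    conv_lhs => rw [show B i0 + x = B i0 + x from rfl]
    rw [Matrix.det_updateRow_add, Matrix.updateRow_eq_self]
  have h4 : updateRow A j0 y = updateRow (updateRow B j0 y) i0 (B i0 + x) := by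
    rw [hA, updateRow_comm' _ hij]
  have h5 : (updateRow (updateRow B j0 y) i0 (B i0 + x)).det
      = (updateRow B j0 y).det + (updateRow (updateRow B j0 y) i0 x).det := by
    have h6 : B i0 = (updateRow B j0 y) i0 := (Matrix.updateRow_ne hij).symm
    rw [h6, Matrix.det_updateRow_add, Matrix.updateRow_eq_self]
  rw [h2, h3, h4, h5]; ring



lemma det_zero_of_kernel' (C : Matrix m m ℝ) (x : m → ℝ) (hx : x ≠ 0) (h : C *ᵥ x = 0) :
    C.det = 0 :=
  (Matrix.exists_mulVec_eq_zero_iff).mp ⟨x, hx, h⟩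

lemma sum_mul_extend (S : Finset m) (w : ↥S → ℝ) (g : m → ℝ) :
    (∑ j, g j * (if h : j ∈ S then w ⟨j, h⟩ else 0)) = ∑ j : ↥S, g ↑j * w j := by
  rw [show (∑ j, g j * (if h : j ∈ S then w ⟨j, h⟩ else 0))
      = ∑ j ∈ S, g j * (if h : j ∈ S then w ⟨j, h⟩ else 0) from
    (Finset.sum_subset (Finset.subset_univ S) (by intro j _ hj; rw [dif_neg hj, mul_zero])).symm]
  rw [← Finset.sum_coe_sort S (fun j => g j * (if h : j ∈ S then w ⟨j, h⟩ else 0))]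
  apply Finset.sum_congr rfl
  intro j _
  rw [dif_pos j.2]

lemma Tlemma (B : Matrix m m ℝ) (S : Finset m)
    (hblock : ∀ i j, ¬(i ∈ S ↔ j ∈ S) → B i j = 0)
    (p q : m) (hp : p ∈ S) (hq : q ∉ S) :
    (updateRow B q (fun k => if k = p then (1:ℝ) else 0)).det = 0 := by
  have hpq : p ≠ q := fun h => hq (h ▸ hp)
  set C := updateRow B q fun k => if k = p then (1:ℝ) else 0 with hC
  set W : Finset m := insert q S with hW
  set H : Matrix ↥W ↥W ℝ := Matrix.of (fun a b => C ↑b ↑a) with hH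
  have hqW : q ∈ W := Finset.mem_insert_self q S
  have hHrow : ∀ b, H ⟨q, hqW⟩ b = 0 := by
    intro b
    show C ↑b q = 0
    rcases Finset.mem_insert.mp b.2 with hb | hb
    · rw [hC]
      have : (b : m) = q := hb
      rw [this, Matrix.updateRow_self, if_neg hpq.symm]
    · have hbq : (b : m) ≠ q := fun h => hq (h ▸ hb)
      rw [hC, Matrix.updateRow_ne hbq]
      exact hblock _ _ (by simp [hb, hq])
  have hHdet : H.det = 0 := Matrix.det_eq_zero_of_row_eq_zero ⟨q, hqW⟩ hHrow
  obtain ⟨z, hz, hzz⟩ := (Matrix.exists_mulVec_eq_zero_iff).mpr hHdet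
  set y : m → ℝ := fun i => if h : i ∈ W then z ⟨i, h⟩ else 0 with hy
  have hy0 : y ≠ 0 := by
    obtain ⟨a, ha⟩ := Function.ne_iff.mp hz
    intro hcon
    apply ha
    have := congrFun hcon ↑a
    simpa [hy, a.2] using this
  have hker : Cᵀ *ᵥ y = 0 := by
    funext j
    show (∑ i, Cᵀ j i * y i) = 0
    have : (∑ i, Cᵀ j i * y i) = ∑ i : ↥W, C ↑i j * z i := by
      rw [hy]
      exact sum_mul_extend W z (fun i => Cᵀ j i)
    rw [this]
    by_cases hj : j ∈ W
    · have : (∑ i : ↥W, C ↑i j * z i) = (H *ᵥ z) ⟨j, hj⟩ := by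
        simp [Matrix.mulVec, dotProduct, hH]
      rw [this, hzz]; rfl
    · apply Finset.sum_eq_zero
      intro i _
      have hjq : j ≠ q := fun h => hj (h ▸ hqW)
      have hjS : j ∉ S := fun h => hj (Finset.mem_insert_of_mem h)
      rcases Finset.mem_insert.mp i.2 with hb | hb
      · have : (i : m) = q := hb
        rw [hC, this, Matrix.updateRow_self, if_neg (fun h => hjS (by rw [h]; exact hp))]
        ring
      · have hbq : (i : m) ≠ q := fun h => hq (h ▸ hb)
        rw [hC, Matrix.updateRow_ne hbq, hblock _ _ (by simp [hb, hjS])]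
        ring
  have : Cᵀ.det = 0 := det_zero_of_kernel' _ y hy0 hker
  rw [← Matrix.det_transpose]
  exact this

lemma det_zero_of_skew_block (M : Matrix m m ℝ) (hM : Mᵀ = -M) (S : Finset m)
    (hodd : Odd S.card) (C : Matrix m m ℝ)
    (h1 : ∀ i ∈ S, ∀ j ∈ S, C i j = M i j)
    (h2 : ∀ i, i ∉ S → ∀ j ∈ S, C i j = 0) : C.det = 0 := by
  set P : Matrix ↥S ↥S ℝ := Matrix.of (fun a b => M ↑a ↑b) with hP
  have hPskew : Pᵀ = -P := by
    ext a b
    show M ↑b ↑a = -M ↑a ↑b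
    have := congrFun (congrFun hM ↑a) ↑b
    simpa using this
  have hPdet : P.det = 0 := det_skew_odd P hPskew (by rwa [Fintype.card_coe])
  obtain ⟨w, hw, hww⟩ := (Matrix.exists_mulVec_eq_zero_iff).mpr hPdet
  set x : m → ℝ := fun i => if h : i ∈ S then w ⟨i, h⟩ else 0 with hx
  have hx0 : x ≠ 0 := by
    obtain ⟨a, ha⟩ := Function.ne_iff.mp hw
    intro hcon
    apply ha
    have := congrFun hcon ↑a
    simpa [hx, a.2] using this
  apply det_zero_of_kernel' C x hx0
  funext i
  show (∑ j, C i j * x j) = 0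
  have heq : (∑ j, C i j * x j) = ∑ j : ↥S, C i ↑j * w j := by
    rw [hx]; exact sum_mul_extend S w (fun j => C i j)
  rw [heq]
  by_cases hi : i ∈ S
  · have : (∑ j : ↥S, C i ↑j * w j) = (P *ᵥ w) ⟨i, hi⟩ := by
      simp only [Matrix.mulVec, dotProduct, hP, Matrix.of_apply]
      apply Finset.sum_congr rfl
      intro j _
      rw [h1 i hi ↑j j.2]
    rw [this, hww]; rfl
  · apply Finset.sum_eq_zero
    intro j _
    rw [h2 i hi ↑j j.2]; ring



def Econg (d : m → ℝ) (k0 : m) : Matrix m m ℝ :=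
  1 - Matrix.of (fun i j => d i * (if j = k0 then 1 else 0))

lemma Amul_apply (d : m → ℝ) (k0 : m) (N : Matrix m m ℝ) (i j : m) :
    (Matrix.of (fun i j => d i * (if j = k0 then (1:ℝ) else 0)) * N) i j = d i * N k0 j := by
  rw [Matrix.mul_apply]
  rw [show (∑ k, Matrix.of (fun i j => d i * (if j = k0 then (1:ℝ) else 0)) i k * N k j)
      = ∑ k, if k = k0 then d i * N k j else 0 from
    Finset.sum_congr rfl (by intro k _; simp only [Matrix.of_apply]; split_ifs <;> ring)]
  rw [Finset.sum_ite_eq' Finset.univ k0 (fun k => d i * N k j)]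
  simp

lemma mulA_apply (d : m → ℝ) (k0 : m) (N : Matrix m m ℝ) (i j : m) :
    (N * (Matrix.of (fun i j => d i * (if j = k0 then (1:ℝ) else 0)))ᵀ) i j = N i k0 * d j := by
  rw [Matrix.mul_apply]
  rw [show (∑ k, N i k * (Matrix.of (fun i j => d i * (if j = k0 then (1:ℝ) else 0)))ᵀ k j)
      = ∑ k, if k = k0 then N i k * d j else 0 from
    Finset.sum_congr rfl (by intro k _; simp only [Matrix.transpose_apply, Matrix.of_apply]; split_ifs <;> ring)]
  rw [Finset.sum_ite_eq' Finset.univ k0 (fun k => N i k * d j)]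
  simp

lemma Econg_conj (d : m → ℝ) (k0 : m) (M : Matrix m m ℝ) :
    Econg d k0 * M * (Econg d k0)ᵀ
      = Matrix.of (fun i j => M i j - d i * M k0 j - M i k0 * d j + d i * d j * M k0 k0) := by
  set A := Matrix.of (fun i j => d i * (if j = k0 then (1:ℝ) else 0)) with hA
  have h1 : Econg d k0 * M * (Econg d k0)ᵀ
      = (M - A * M) - ((M - A * M) * Aᵀ) := by
    rw [Econg]
    rw [Matrix.transpose_sub, Matrix.transpose_one]
    rw [Matrix.sub_mul, Matrix.one_mul, Matrix.mul_sub, Matrix.mul_one]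
  rw [h1]
  ext i j
  simp only [Matrix.sub_apply, Matrix.of_apply]
  rw [Amul_apply, mulA_apply]
  have h2 : (M - A * M) i k0 = M i k0 - d i * M k0 k0 := by
    rw [Matrix.sub_apply, Amul_apply]
  rw [h2]; try ring

lemma Econg_isUnit (d : m → ℝ) (k0 : m) (hd : d k0 = 0) : IsUnit (Econg d k0).det := by
  set A := Matrix.of (fun i j => d i * (if j = k0 then (1:ℝ) else 0)) with hA
  have hAA : A * A = 0 := by
    ext i j
    rw [Amul_apply]
    simp [hA, hd]
  have hEE : Econg d k0 * (1 + A) = 1 := by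
    rw [Econg]
    rw [Matrix.sub_mul, Matrix.one_mul, Matrix.mul_add, Matrix.mul_one, hAA]
    abel
  exact IsUnit.of_mul_eq_one _ (by rw [← Matrix.det_mul, hEE, Matrix.det_one])

lemma Econg_skew (d : m → ℝ) (k0 : m) (M : Matrix m m ℝ) (hM : Mᵀ = -M) :
    (Econg d k0 * M * (Econg d k0)ᵀ)ᵀ = -(Econg d k0 * M * (Econg d k0)ᵀ) := by
  rw [Matrix.transpose_mul, Matrix.transpose_mul, Matrix.transpose_transpose, hM]
  simp [Matrix.neg_mul, Matrix.mul_neg, Matrix.mul_assoc]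

lemma Econg_MInv (M : Matrix m m ℝ) (X : Finset m) (d : m → ℝ) (k0 : m)
    (hsupp : ∀ i, d i ≠ 0 → (i ∈ X ↔ k0 ∈ X)) :
    Econg d k0 * MInv X M * (Econg d k0)ᵀ = MInv X (Econg d k0 * M * (Econg d k0)ᵀ) := by
  rw [Econg_conj, Econg_conj]
  ext i j
  simp only [Matrix.of_apply, MInv]
  by_cases hk : k0 ∈ X
  · have hd1 : ∀ a, a ∉ X → d a = 0 := fun a ha => by
      by_contra h; exact ha ((hsupp a h).mpr hk)
    by_cases hi : i ∈ X <;> by_cases hj : j ∈ X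
    · simp only [hi, hj, hk, and_self, if_true, true_and]
      try ring
    · rw [hd1 j hj]
      simp only [hi, hj, hk, and_false, if_false, and_true, true_and, if_true]
      try ring
    · rw [hd1 i hi]
      simp only [hi, hj, hk, false_and, if_false, and_self, if_true, true_and]
      try ring
    · rw [hd1 i hi, hd1 j hj]
      simp only [hi, hj, hk, false_and, and_false, if_false]
      try ring
  · have hd1 : ∀ a, a ∈ X → d a = 0 := fun a ha => by
      by_contra h; exact hk ((hsupp a h).mp ha)
    by_cases hi : i ∈ X <;> by_cases hj : j ∈ X
    · rw [hd1 i hi, hd1 j hj]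
      simp only [hi, hj, hk, and_self, if_true, false_and, and_false, if_false]
      try ring
    · rw [hd1 i hi]
      simp only [hi, hj, hk, and_false, false_and, if_false]
      try ring
    · rw [hd1 j hj]
      simp only [hi, hj, hk, false_and, and_false, if_false]
      try ring
    · simp only [hi, hj, hk, false_and, and_false, if_false]
      try ring



lemma expfull (B : Matrix m m ℝ) {i0 j0 : m} (hij : i0 ≠ j0) (c : ℝ) (e1 e2 : m → ℝ) :
    (updateRow (updateRow B i0 (B i0 + c • e2)) j0 (B j0 + (-c) • e1)).det
      = B.det + c * (updateRow B i0 e2).det - c * (updateRow B j0 e1).det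
        - c * c * (updateRow (updateRow B j0 e1) i0 e2).det := by
  rw [exp4 B hij]
  have h4 : (updateRow (updateRow B j0 ((-c) • e1)) i0 (c • e2)).det
      = -(c*c) * (updateRow (updateRow B j0 e1) i0 e2).det := by
    rw [Matrix.det_updateRow_smul, ← updateRow_comm' B hij e2 ((-c) • e1),
      Matrix.det_updateRow_smul, updateRow_comm' B hij e2 e1]
    ring
  rw [h4, Matrix.det_updateRow_smul, Matrix.det_updateRow_smul]
  ring

lemma core (M : Matrix m m ℝ) (hM : Mᵀ = -M) (X : Finset m) (i0 j0 : m)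
    (hi0 : i0 ∈ X) (hj0 : j0 ∉ X)
    (hz : ∀ i ∈ X, ∀ j, j ∉ X → ¬(i = i0 ∧ j = j0) → M i j = 0) :
    (MInv X M).det = M.det := by
  have hsk : ∀ i j, M j i = -M i j := fun i j => by
    have := congrFun (congrFun hM i) j; simpa using this
  have hij : i0 ≠ j0 := fun h => hj0 (h ▸ hi0)
  set c := M i0 j0 with hc
  set e1 : m → ℝ := fun k => if k = i0 then (1:ℝ) else 0 with he1
  set e2 : m → ℝ := fun k => if k = j0 then (1:ℝ) else 0 with he2
  have he1v : ∀ k, e1 k = if k = i0 then (1:ℝ) else 0 := fun k => rfl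
  have he2v : ∀ k, e2 k = if k = j0 then (1:ℝ) else 0 := fun k => rfl
  set B : Matrix m m ℝ := Matrix.of (fun i j => if (i ∈ X ↔ j ∈ X) then M i j else 0) with hB
  set B' : Matrix m m ℝ := Matrix.of (fun i j => if i ∈ X then -B i j else B i j) with hB'
  have hBapp : ∀ i j, B i j = if (i ∈ X ↔ j ∈ X) then M i j else 0 := fun i j => rfl
  have hB'app : ∀ i j, B' i j = if i ∈ X then -B i j else B i j := fun i j => rfl
  -- decomposition of M
  have hMdec : M = updateRow (updateRow B i0 (B i0 + c • e2)) j0 (B j0 + (-c) • e1) := by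
    ext a b
    by_cases h1 : a = j0
    · rw [h1, Matrix.updateRow_self, Pi.add_apply, Pi.smul_apply, smul_eq_mul, he1v b]
      by_cases h2 : b = i0
      · rw [h2, hBapp, if_neg (by simp [hi0, hj0]), if_pos rfl, hsk i0 j0]; ring
      · rw [if_neg h2, hBapp]
        by_cases hbX : b ∈ X
        · rw [if_neg (by simp [hbX, hj0]), hsk b j0, hz b hbX j0 hj0 (by tauto)]; ring
        · rw [if_pos (by simp [hbX, hj0])]; ring
    · rw [Matrix.updateRow_ne h1]
      by_cases h2 : a = i0
      · rw [h2, Matrix.updateRow_self, Pi.add_apply, Pi.smul_apply, smul_eq_mul, he2v b]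
        by_cases h3 : b = j0
        · rw [h3, hBapp, if_neg (by simp [hi0, hj0]), if_pos rfl]; ring
        · rw [if_neg h3, hBapp]
          by_cases hbX : b ∈ X
          · rw [if_pos (by simp [hi0, hbX])]; ring
          · rw [if_neg (by simp [hi0, hbX]), hz i0 hi0 b hbX (by tauto)]; ring
      · rw [Matrix.updateRow_ne h2, hBapp]
        by_cases haX : a ∈ X <;> by_cases hbX : b ∈ X
        · rw [if_pos (by simp [haX, hbX])]
        · rw [if_neg (by simp [haX, hbX]), hz a haX b hbX (by tauto)]
        · rw [if_neg (by simp [haX, hbX]), hsk b a, hz b hbX a haX (by tauto)]; ring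
        · rw [if_pos (by simp [haX, hbX])]
  -- decomposition of MInv X M
  have hMIdec : MInv X M
      = updateRow (updateRow B' i0 (B' i0 + c • e2)) j0 (B' j0 + (-c) • e1) := by
    ext a b
    show (if a ∈ X ∧ b ∈ X then -M a b else M a b) = _
    by_cases h1 : a = j0
    · rw [h1, Matrix.updateRow_self, Pi.add_apply, Pi.smul_apply, smul_eq_mul, he1v b,
        if_neg (by tauto), hB'app, if_neg hj0]
      by_cases h2 : b = i0
      · rw [h2, hBapp, if_neg (by simp [hi0, hj0]), if_pos rfl, hsk i0 j0]; ring
      · rw [if_neg h2, hBapp]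
        by_cases hbX : b ∈ X
        · rw [if_neg (by simp [hbX, hj0]), hsk b j0, hz b hbX j0 hj0 (by tauto)]; ring
        · rw [if_pos (by simp [hbX, hj0])]; ring
    · rw [Matrix.updateRow_ne h1]
      by_cases h2 : a = i0
      · rw [h2, Matrix.updateRow_self, Pi.add_apply, Pi.smul_apply, smul_eq_mul, he2v b,
          hB'app, if_pos hi0]
        by_cases h3 : b = j0
        · rw [h3, if_neg (by tauto), hBapp, if_neg (by simp [hi0, hj0]), if_pos rfl]; ring
        · rw [if_neg h3, hBapp]
          by_cases hbX : b ∈ X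
          · rw [if_pos (by tauto), if_pos (by simp [hi0, hbX])]; ring
          · rw [if_neg (by tauto), if_neg (by simp [hi0, hbX]),
              hz i0 hi0 b hbX (by tauto)]; ring
      · rw [Matrix.updateRow_ne h2, hB'app, hBapp]
        by_cases haX : a ∈ X <;> by_cases hbX : b ∈ X
        · rw [if_pos (by tauto), if_pos haX, if_pos (by simp [haX, hbX])]
        · rw [if_neg (by tauto), if_pos haX, if_neg (by simp [haX, hbX]),
            hz a haX b hbX (by tauto)]; ring
        · rw [if_neg (by tauto), if_neg haX, if_neg (by simp [haX, hbX]),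
            hsk b a, hz b hbX a haX (by tauto)]; ring
        · rw [if_neg (by tauto), if_neg haX, if_pos (by simp [haX, hbX])]
  set T2 := (updateRow B i0 e2).det with hT2def
  set T3 := (updateRow B j0 e1).det with hT3def
  set T4 := (updateRow (updateRow B j0 e1) i0 e2).det with hT4def
  have dM : M.det = B.det + c * T2 - c * T3 - c * c * T4 := by
    conv_lhs => rw [hMdec]
    exact expfull B hij c e1 e2
  have dMI : (MInv X M).det = B'.det + c * (updateRow B' i0 e2).det
      - c * (updateRow B' j0 e1).det
      - c * c * (updateRow (updateRow B' j0 e1) i0 e2).det := by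
    conv_lhs => rw [hMIdec]
    exact expfull B' hij c e1 e2
  have hBrel : B'.det = (-1 : ℝ) ^ X.card * B.det := det_negRows B X
  have hT2rel : (updateRow B' i0 e2).det = (-1 : ℝ) ^ (X.erase i0).card * T2 := by
    have hmat : updateRow B' i0 e2 = Matrix.of (fun i j =>
        if i ∈ X.erase i0 then -(updateRow B i0 e2) i j else (updateRow B i0 e2) i j) := by
      ext a b
      by_cases h : a = i0
      · rw [h, Matrix.updateRow_self, Matrix.of_apply, if_neg (Finset.notMem_erase i0 X),
          Matrix.updateRow_self]
      · rw [Matrix.updateRow_ne h, Matrix.of_apply, hB'app, Matrix.updateRow_ne h]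
        by_cases haX : a ∈ X
        · rw [if_pos haX, if_pos (Finset.mem_erase.mpr ⟨h, haX⟩)]
        · rw [if_neg haX, if_neg (fun hc => haX (Finset.mem_of_mem_erase hc))]
    rw [hmat, det_negRows]
  have hT3rel : (updateRow B' j0 e1).det = (-1 : ℝ) ^ X.card * T3 := by
    have hmat : updateRow B' j0 e1 = Matrix.of (fun i j =>
        if i ∈ X then -(updateRow B j0 e1) i j else (updateRow B j0 e1) i j) := by
      ext a b
      by_cases h : a = j0
      · rw [h, Matrix.updateRow_self, Matrix.of_apply, if_neg hj0, Matrix.updateRow_self]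
      · rw [Matrix.updateRow_ne h, Matrix.of_apply, hB'app, Matrix.updateRow_ne h]
    rw [hmat, det_negRows]
  have hT4rel : (updateRow (updateRow B' j0 e1) i0 e2).det
      = (-1 : ℝ) ^ (X.erase i0).card * T4 := by
    have hmat : updateRow (updateRow B' j0 e1) i0 e2 = Matrix.of (fun i j =>
        if i ∈ X.erase i0 then -(updateRow (updateRow B j0 e1) i0 e2) i j
        else (updateRow (updateRow B j0 e1) i0 e2) i j) := by
      ext a b
      by_cases h : a = i0
      · rw [h, Matrix.updateRow_self, Matrix.of_apply, if_neg (Finset.notMem_erase i0 X),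
          Matrix.updateRow_self]
      · rw [Matrix.updateRow_ne h, Matrix.of_apply]
        by_cases h1 : a = j0
        · rw [h1, Matrix.updateRow_self,
            if_neg (fun hc => hj0 (Finset.mem_of_mem_erase hc)),
            Matrix.updateRow_ne (show j0 ≠ i0 from fun hh => hij hh.symm),
            Matrix.updateRow_self]
        · rw [Matrix.updateRow_ne h1, hB'app, Matrix.updateRow_ne h, Matrix.updateRow_ne h1]
          by_cases haX : a ∈ X
          · rw [if_pos haX, if_pos (Finset.mem_erase.mpr ⟨h, haX⟩)]
          · rw [if_neg haX, if_neg (fun hc => haX (Finset.mem_of_mem_erase hc))]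
    rw [hmat, det_negRows]
  have hblockB : ∀ i j, ¬(i ∈ X ↔ j ∈ X) → B i j = 0 := by
    intro i j hij'
    rw [hBapp, if_neg hij']
  have hT2zero : T2 = 0 := by
    rw [hT2def]
    have := Tlemma B Xᶜ
      (fun i j h => hblockB i j (by simp only [Finset.mem_compl] at h; tauto))
      j0 i0 (Finset.mem_compl.mpr hj0) (by simp [hi0])
    convert this using 3
  have hT3zero : T3 = 0 := by
    rw [hT3def]
    have := Tlemma B X hblockB i0 j0 hi0 hj0
    convert this using 3
  have hcard : 0 < X.card := Finset.card_pos.mpr ⟨i0, hi0⟩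
  have hBzero : Odd X.card → B.det = 0 := by
    intro hodd
    apply det_zero_of_skew_block M hM X hodd B
    · intro i hi j hj; rw [hBapp, if_pos (by simp [hi, hj])]
    · intro i hi j hj; rw [hBapp, if_neg (by simp [hi, hj])]
  have hT4zero : Even X.card → T4 = 0 := by
    intro heven
    have hodd : Odd (X.erase i0).card := by
      rw [Finset.card_erase_of_mem hi0]
      exact Nat.Even.sub_odd hcard heven odd_one
    apply det_zero_of_skew_block M hM (X.erase i0) hodd
    · intro i hi j hj
      obtain ⟨hii0, hiX⟩ := Finset.mem_erase.mp hi
      obtain ⟨hji0, hjX⟩ := Finset.mem_erase.mp hj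
      rw [Matrix.updateRow_ne hii0, Matrix.updateRow_ne (fun h : i = j0 => hj0 (h ▸ hiX)),
        hBapp, if_pos (by simp [hiX, hjX])]
    · intro i hi j hj
      obtain ⟨hji0, hjX⟩ := Finset.mem_erase.mp hj
      by_cases h : i = i0
      · rw [h, Matrix.updateRow_self, he2v j, if_neg (fun hh : j = j0 => hj0 (hh ▸ hjX))]
      · rw [Matrix.updateRow_ne h]
        by_cases h1 : i = j0
        · rw [h1, Matrix.updateRow_self, he1v j, if_neg hji0]
        · rw [Matrix.updateRow_ne h1, hBapp,
            if_neg (by simp only [Finset.mem_erase] at hi; tauto)]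
  rw [dM, dMI, hBrel, hT2rel, hT3rel, hT4rel, hT2zero, hT3zero,
    Finset.card_erase_of_mem hi0]
  rcases Nat.even_or_odd X.card with he | ho
  · rw [hT4zero he, he.neg_one_pow]; ring
  · rw [hBzero ho, (Nat.Odd.sub_odd ho odd_one).neg_one_pow]; ring



lemma rank_submatrix_le' {α β γ δ : Type*} [Fintype α] [Fintype β] [Fintype γ] [Fintype δ]
    [DecidableEq α] [DecidableEq β]
    (A : Matrix α β ℝ) (f : γ → α) (g : δ → β) : (A.submatrix f g).rank ≤ A.rank := by
  have h1 : A.submatrix f g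
      = (Matrix.of fun (i : γ) (k : α) => if f i = k then (1:ℝ) else 0) * A
        * (Matrix.of fun (k : β) (j : δ) => if k = g j then (1:ℝ) else 0) := by
    have hQ : ∀ i l, ((Matrix.of fun (i : γ) (k : α) => if f i = k then (1:ℝ) else 0) * A) i l
        = A (f i) l := by
      intro i l
      rw [Matrix.mul_apply]
      rw [show (∑ k, (Matrix.of fun (i : γ) (k : α) => if f i = k then (1:ℝ) else 0) i k * A k l)
          = ∑ k, if k = f i then A k l else 0 from Finset.sum_congr rfl (by
            intro k _
            simp only [Matrix.of_apply]
            by_cases h : f i = k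
            · rw [if_pos h, if_pos h.symm, one_mul]
            · rw [if_neg h, if_neg (Ne.symm h), zero_mul])]
      rw [Finset.sum_ite_eq' Finset.univ (f i) (fun k => A k l)]
      simp
    ext i j
    rw [Matrix.mul_apply]
    rw [show (∑ l, ((Matrix.of fun (i : γ) (k : α) => if f i = k then (1:ℝ) else 0) * A) i l
          * (Matrix.of fun (k : β) (j : δ) => if k = g j then (1:ℝ) else 0) l j)
        = ∑ l, if l = g j then A (f i) l else 0 from Finset.sum_congr rfl (by
          intro l _
          rw [hQ]
          simp only [Matrix.of_apply]
          by_cases h : l = g j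
          · rw [if_pos h, if_pos h, mul_one]
          · rw [if_neg h, if_neg h, mul_zero])]
    rw [Finset.sum_ite_eq' Finset.univ (g j) (fun l => A (f i) l)]
    simp [Matrix.submatrix_apply]
  rw [h1]
  exact le_trans (Matrix.rank_mul_le_left _ _) (Matrix.rank_mul_le_right _ _)

lemma minors_of_rank_le_one {α β : Type*} [Fintype α] [Fintype β] [DecidableEq α] [DecidableEq β]
    (A : Matrix α β ℝ) (h : A.rank ≤ 1) (i i' : α) (j j' : β) :
    A i j * A i' j' = A i j' * A i' j := by
  by_contra hne
  have hdet : (A.submatrix ![i, i'] ![j, j']).det ≠ 0 := by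
    rw [Matrix.det_fin_two]
    simpa [Matrix.submatrix_apply] using sub_ne_zero.mpr hne
  have hunit : IsUnit (A.submatrix ![i, i'] ![j, j']) :=
    (Matrix.isUnit_iff_isUnit_det _).mpr (isUnit_iff_ne_zero.mpr hdet)
  have h2 : (A.submatrix ![i, i'] ![j, j']).rank = 2 := by
    rw [Matrix.rank_of_isUnit _ hunit, Fintype.card_fin]
  have h3 := rank_submatrix_le' A ![i, i'] ![j, j']
  omega


lemma main_step (M : Matrix m m ℝ) (hM : Mᵀ = -M) (X : Finset m)
    (hminor : ∀ i ∈ X, ∀ i' ∈ X, ∀ j, j ∉ X → ∀ j', j' ∉ X →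
      M i j * M i' j' = M i j' * M i' j) :
    (MInv X M).det = M.det := by
  have hsk : ∀ i j, M j i = -M i j := fun i j => by
    have := congrFun (congrFun hM i) j; simpa using this
  have hdiag : ∀ i, M i i = 0 := fun i => by have := hsk i i; linarith
  by_cases hXe : X = ∅
  · have : MInv X M = M := by ext i j; simp [MInv, hXe]
    rw [this]
  by_cases hXu : X = Finset.univ
  · have : MInv X M = Mᵀ := by
      ext i j
      show (if i ∈ X ∧ j ∈ X then -M i j else M i j) = M j i
      rw [if_pos (by simp [hXu]), hsk i j]
    rw [this, Matrix.det_transpose]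
  by_cases hc : ∀ i ∈ X, ∀ j, j ∉ X → M i j = 0
  · obtain ⟨i1, hi1⟩ := Finset.nonempty_iff_ne_empty.mpr hXe
    obtain ⟨j1, hj1⟩ : ∃ j, j ∉ X := by
      by_contra h; push_neg at h; exact hXu (Finset.eq_univ_iff_forall.mpr h)
    exact core M hM X i1 j1 hi1 hj1 (fun i hi j hj _ => hc i hi j hj)
  · push_neg at hc
    obtain ⟨i0, hi0, j0, hj0, hc0⟩ := hc
    set cc := M i0 j0 with hcc
    set d1 : m → ℝ := fun i => if i ∈ X ∧ i ≠ i0 then M i j0 / cc else 0 with hd1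
    set d2 : m → ℝ := fun j => if j ∉ X ∧ j ≠ j0 then M i0 j / cc else 0 with hd2
    set E1 := Econg d1 i0 with hE1
    set E2 := Econg d2 j0 with hE2
    set M1 := E1 * M * E1ᵀ with hM1def
    set M2 := E2 * M1 * E2ᵀ with hM2def
    have hM1app : ∀ i j, M1 i j = M i j - d1 i * M i0 j - M i i0 * d1 j
        + d1 i * d1 j * M i0 i0 := by
      intro i j; rw [hM1def, hE1, Econg_conj]; rfl
    have hM1skew : M1ᵀ = -M1 := by rw [hM1def, hE1]; exact Econg_skew d1 i0 M hM
    have hd1not : ∀ j, j ∉ X → d1 j = 0 := by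
      intro j hj; rw [hd1]; simp [hj]
    have hd1i0 : d1 i0 = 0 := by rw [hd1]; simp
    have hM1cross : ∀ i ∈ X, i ≠ i0 → ∀ j, j ∉ X → M1 i j = 0 := by
      intro i hi hne j hj
      have key := hminor i hi i0 hi0 j hj j0 hj0
      have h1 : d1 i = M i j0 / cc := by rw [hd1]; simp [hi, hne]
      rw [hM1app, hd1not j hj, h1, mul_zero, mul_zero, zero_mul, add_zero, sub_zero,
        sub_eq_zero, div_mul_eq_mul_div, eq_div_iff hc0]
      linarith [key]
    have hrow : ∀ j, M1 i0 j = M i0 j := by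
      intro j
      rw [hM1app, hd1i0, hdiag i0]; ring
    have hM2app : ∀ i j, M2 i j = M1 i j - d2 i * M1 j0 j - M1 i j0 * d2 j
        + d2 i * d2 j * M1 j0 j0 := by
      intro i j; rw [hM2def, hE2, Econg_conj]; rfl
    have hM2skew : M2ᵀ = -M2 := by rw [hM2def, hE2]; exact Econg_skew d2 j0 M1 hM1skew
    have hd2in : ∀ i, i ∈ X → d2 i = 0 := by
      intro i hi; rw [hd2]; simp [hi]
    have hd2j0 : d2 j0 = 0 := by rw [hd2]; simp
    have hM2cross : ∀ i ∈ X, ∀ j, j ∉ X → ¬(i = i0 ∧ j = j0) → M2 i j = 0 := by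
      intro i hi j hj hne
      rw [hM2app, hd2in i hi, zero_mul, sub_zero, zero_mul, zero_mul, add_zero]
      by_cases hii0 : i = i0
      · have hjj0 : j ≠ j0 := fun h => hne ⟨hii0, h⟩
        have h2 : d2 j = M i0 j / cc := by rw [hd2]; simp [hj, hjj0]
        rw [hii0, hrow j, hrow j0, h2, ← hcc, sub_eq_zero, mul_div_cancel₀ _ hc0]
      · rw [hM1cross i hi hii0 j hj, hM1cross i hi hii0 j0 hj0, zero_mul, sub_zero]
    have hcore : (MInv X M2).det = M2.det :=
      core M2 hM2skew X i0 j0 hi0 hj0 hM2cross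
    have hsupp1 : ∀ i, d1 i ≠ 0 → (i ∈ X ↔ i0 ∈ X) := by
      intro i hdi
      have : i ∈ X := by
        by_contra h; exact hdi (hd1not i h)
      exact iff_of_true this hi0
    have hsupp2 : ∀ j, d2 j ≠ 0 → (j ∈ X ↔ j0 ∈ X) := by
      intro j hdj
      have : j ∉ X := fun h => hdj (hd2in j h)
      exact iff_of_false this hj0
    have hMinv1 : E1 * MInv X M * E1ᵀ = MInv X M1 := by
      rw [hM1def, hE1]; exact Econg_MInv M X d1 i0 hsupp1
    have hMinv2 : E2 * MInv X M1 * E2ᵀ = MInv X M2 := by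
      rw [hM2def, hE2]; exact Econg_MInv M1 X d2 j0 hsupp2
    have hconjdet : ∀ (E N : Matrix m m ℝ), (E * N * Eᵀ).det = E.det * E.det * N.det := by
      intro E N; rw [Matrix.det_mul, Matrix.det_mul, Matrix.det_transpose]; ring
    have e1u : E1.det ≠ 0 := (Econg_isUnit d1 i0 hd1i0).ne_zero
    have e2u : E2.det ≠ 0 := (Econg_isUnit d2 j0 hd2j0).ne_zero
    have h1 : (MInv X M2).det
        = E2.det * E2.det * (E1.det * E1.det * (MInv X M).det) := by
      rw [← hMinv2, hconjdet, ← hMinv1, hconjdet]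
    have h2 : M2.det = E2.det * E2.det * (E1.det * E1.det * M.det) := by
      rw [hM2def, hconjdet, hM1def, hconjdet]
    rw [h1, h2] at hcore
    have hcore2 := mul_left_cancel₀ (mul_ne_zero e2u e2u) hcore
    exact mul_left_cancel₀ (mul_ne_zero e1u e1u) hcore2

theorem stmt_14 {n : ℕ} (A B : Matrix (Fin n) (Fin n) ℝ) (hA : Aᵀ = -A) (hB : Bᵀ = -B)
    (h : HLCRE A B) :
    ∀ Y : Finset (Fin n), (pSub A Y).det = (pSub B Y).det := by
  obtain ⟨N, f, h0, hN, hskewAll, hstep⟩ := h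
  have H : ∀ k, k ≤ N → ∀ Y : Finset (Fin n), (pSub (f k) Y).det = (pSub A Y).det := by
    intro k
    induction k with
    | zero => intro _ Y; rw [h0]
    | succ k ih =>
      intro hk Y
      have hkN : k < N := Nat.lt_of_lt_of_le (Nat.lt_succ_self k) hk
      obtain ⟨X, hclan, heq⟩ := hstep k hkN
      rw [heq]
      have hskewk : (f k)ᵀ = -(f k) := hskewAll k (le_of_lt hkN)
      have hminorFull : ∀ i ∈ X, ∀ i' ∈ X, ∀ j, j ∉ X → ∀ j', j' ∉ X →
          f k i j * f k i' j' = f k i j' * f k i' j := by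
        intro i hi i' hi' j hj j' hj'
        exact minors_of_rank_le_one (oSub (f k) X Xᶜ) hclan.1 ⟨i, hi⟩ ⟨i', hi'⟩
          ⟨j, Finset.mem_compl.mpr hj⟩ ⟨j', Finset.mem_compl.mpr hj'⟩
      set X' : Finset ↥Y := Finset.univ.filter (fun i : ↥Y => ↑i ∈ X) with hX'
      have hmemX' : ∀ i : ↥Y, i ∈ X' ↔ (i : Fin n) ∈ X := by
        intro i; rw [hX']; simp
      have hps : pSub (MInv X (f k)) Y = MInv X' (pSub (f k) Y) := by
        ext i j
        show (if (↑i ∈ X ∧ ↑j ∈ X) then -(f k) ↑i ↑j else (f k) ↑i ↑j)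
          = (if (i ∈ X' ∧ j ∈ X') then -(f k) ↑i ↑j else (f k) ↑i ↑j)
        by_cases h1 : ((i : Fin n) ∈ X ∧ (j : Fin n) ∈ X)
        · rw [if_pos h1, if_pos ⟨(hmemX' i).mpr h1.1, (hmemX' j).mpr h1.2⟩]
        · rw [if_neg h1, if_neg (fun hc => h1 ⟨(hmemX' i).mp hc.1, (hmemX' j).mp hc.2⟩)]
      rw [hps]
      have hskewY : (pSub (f k) Y)ᵀ = -(pSub (f k) Y) := by
        ext i j
        show (f k) ↑j ↑i = -(f k) ↑i ↑j
        have := congrFun (congrFun hskewk ↑i) ↑j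
        simpa using this
      have hminorY : ∀ i ∈ X', ∀ i' ∈ X', ∀ j, j ∉ X' → ∀ j', j' ∉ X' →
          (pSub (f k) Y) i j * (pSub (f k) Y) i' j'
            = (pSub (f k) Y) i j' * (pSub (f k) Y) i' j := by
        intro i hi i' hi' j hj j' hj'
        exact hminorFull ↑i ((hmemX' i).mp hi) ↑i' ((hmemX' i').mp hi')
          ↑j (fun hh => hj ((hmemX' j).mpr hh)) ↑j' (fun hh => hj' ((hmemX' j').mpr hh))
      rw [main_step (pSub (f k) Y) hskewY X' hminorY]
      exact ih (le_of_lt hkN) Y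
  intro Y
  rw [← hN]
  exact (H N le_rfl Y).symm
end

section
/- Let G be a graph on four vertices i,j,k,l with i adjacent to j,k,l, and let G^σ, G^τ be two orientations of G with all arcs at i directed away from i in both. If det(S(G^σ)) = det(S(G^τ)), then the induced oriented subgraphs G^σ[{j,k,l}] and G^τ[{j,k,l}] are hemimorphic (isomorphic or one isomorphic to the converse of the other). -/
open Matrix

def SkewAdj {n : ℕ} (Γ : Fin n → Fin n → Bool) : Matrix (Fin n) (Fin n) ℝ :=
  fun i j => if Γ i j then 1 else if Γ j i then -1 else 0

def IsOrientation {n : ℕ} (G : SimpleGraph (Fin n)) (Γ : Fin n → Fin n → Bool) : Prop :=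
  (∀ i j, G.Adj i j ↔ (Γ i j = true ∨ Γ j i = true)) ∧
  ∀ i j, Γ i j = true → Γ j i = false

def IsClan {n : ℕ} (Γ : Fin n → Fin n → Bool) (X : Finset (Fin n)) : Prop :=
  ∀ a ∈ X, ∀ b ∈ X, ∀ x ∉ X,
    (Γ a x = Γ b x) ∧ (Γ x a = Γ x b)

set_option maxRecDepth 100000
set_option maxHeartbeats 2000000
set_option synthInstance.maxHeartbeats 1000000
set_option synthInstance.maxSize 2000

def ent (s : Fin 3 → Fin 3 → Bool) (a b : Fin 3) : ℤ :=
  if s a b then 1 else if s b a then -1 else 0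

def pfZ (s : Fin 3 → Fin 3 → Bool) : ℤ := ent s 0 1 - ent s 0 2 + ent s 1 2

def mk3 (x y z u v w : Bool) : Fin 3 → Fin 3 → Bool :=
  ![![false, x, y], ![u, false, z], ![v, w, false]]

theorem key : ∀ x y z u v w x' y' z' u' v' w' : Bool,
    (∀ a b, (mk3 x y z u v w a b || mk3 x y z u v w b a)
      = (mk3 x' y' z' u' v' w' a b || mk3 x' y' z' u' v' w' b a)) →
    (∀ a b, mk3 x y z u v w a b = true → mk3 x y z u v w b a = false) →
    (∀ a b, mk3 x' y' z' u' v' w' a b = true → mk3 x' y' z' u' v' w' b a = false) →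
    (pfZ (mk3 x y z u v w) = pfZ (mk3 x' y' z' u' v' w') ∨
     pfZ (mk3 x y z u v w) = -pfZ (mk3 x' y' z' u' v' w')) →
    (∃ e : Equiv.Perm (Fin 3), ∀ a b,
        mk3 x y z u v w a b = mk3 x' y' z' u' v' w' (e a) (e b)) ∨
    (∃ e : Equiv.Perm (Fin 3), ∀ a b,
        mk3 x y z u v w a b = mk3 x' y' z' u' v' w' (e b) (e a)) := by decide

lemma det_skew4 (x y z : ℝ) :
    (!![0,1,1,1; -1,0,x,y; -1,-x,0,z; -1,-y,-z,0] : Matrix (Fin 4) (Fin 4) ℝ).det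
      = (x - y + z)^2 := by
  rw [Matrix.det_succ_row_zero]
  simp [Fin.sum_univ_succ, Matrix.det_fin_three, Fin.succAbove]
  ring

lemma skew_neg {σ : Fin 4 → Fin 4 → Bool}
    (h : ∀ i j, σ i j = true → σ j i = false) (i j : Fin 4) :
    SkewAdj σ j i = -SkewAdj σ i j := by
  rcases h1 : σ i j with _ | _ <;> rcases h2 : σ j i with _ | _ <;>
    simp [SkewAdj, h1, h2]
  exact absurd (h _ _ h1) (by simp [h2])

lemma skew_det {G : SimpleGraph (Fin 4)} {σ : Fin 4 → Fin 4 → Bool}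
    (hσ : IsOrientation G σ)
    (hadj : ∀ v : Fin 4, v ≠ 0 → G.Adj 0 v)
    (hσ0 : ∀ v : Fin 4, v ≠ 0 → σ 0 v = true) :
    (SkewAdj σ).det
      = (SkewAdj σ 1 2 - SkewAdj σ 1 3 + SkewAdj σ 2 3)^2 := by
  have hdiag : ∀ v, σ v v = false := by
    intro v
    rcases h : σ v v with _ | _
    · rfl
    · exact absurd ((hσ.1 v v).2 (Or.inl h)) (G.irrefl)
  have h01 : σ 0 1 = true := hσ0 1 (by decide)
  have h02 : σ 0 2 = true := hσ0 2 (by decide)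
  have h03 : σ 0 3 = true := hσ0 3 (by decide)
  have h10 : σ 1 0 = false := hσ.2 0 1 h01
  have h20 : σ 2 0 = false := hσ.2 0 2 h02
  have h30 : σ 3 0 = false := hσ.2 0 3 h03
  have hM : SkewAdj σ = !![0,1,1,1;
      -1,0,SkewAdj σ 1 2,SkewAdj σ 1 3;
      -1,-SkewAdj σ 1 2,0,SkewAdj σ 2 3;
      -1,-SkewAdj σ 1 3,-SkewAdj σ 2 3,0] := by
    ext i j
    fin_cases i <;> fin_cases j <;>
      first
        | exact skew_neg hσ.2 1 2
        | exact skew_neg hσ.2 1 3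
        | exact skew_neg hσ.2 2 3
        | simp [SkewAdj, hdiag, h01, h02, h03, h10, h20, h30,
            Matrix.vecHead, Matrix.vecTail]
  rw [hM, det_skew4]
  simp

theorem stmt_18 (G : SimpleGraph (Fin 4)) (σ τ : Fin 4 → Fin 4 → Bool)
    (hσ : IsOrientation G σ) (hτ : IsOrientation G τ)
    (hadj : ∀ v : Fin 4, v ≠ 0 → G.Adj 0 v)
    (hσ0 : ∀ v : Fin 4, v ≠ 0 → σ 0 v = true)
    (hτ0 : ∀ v : Fin 4, v ≠ 0 → τ 0 v = true)
    (hdet : (SkewAdj σ).det = (SkewAdj τ).det) :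
    (∃ e : Equiv.Perm (Fin 3), ∀ a b : Fin 3, σ a.succ b.succ = τ (e a).succ (e b).succ) ∨
    (∃ e : Equiv.Perm (Fin 3), ∀ a b : Fin 3, σ a.succ b.succ = τ (e b).succ (e a).succ) := by
  set s : Fin 3 → Fin 3 → Bool := fun a b => σ a.succ b.succ with hs_def
  set t : Fin 3 → Fin 3 → Bool := fun a b => τ a.succ b.succ with ht_def
  -- cast of Pfaffian entries
  have hcastσ : ∀ a b : Fin 3, ((ent s a b : ℤ) : ℝ) = SkewAdj σ a.succ b.succ := by
    intro a b
    simp only [ent, SkewAdj, hs_def]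
    split_ifs <;> norm_num
  have hcastτ : ∀ a b : Fin 3, ((ent t a b : ℤ) : ℝ) = SkewAdj τ a.succ b.succ := by
    intro a b
    simp only [ent, SkewAdj, ht_def]
    split_ifs <;> norm_num
  have hsucc0 : (0 : Fin 3).succ = (1 : Fin 4) := rfl
  have hsucc1 : (1 : Fin 3).succ = (2 : Fin 4) := rfl
  have hsucc2 : (2 : Fin 3).succ = (3 : Fin 4) := rfl
  have hpfσ : ((pfZ s : ℤ) : ℝ) = SkewAdj σ 1 2 - SkewAdj σ 1 3 + SkewAdj σ 2 3 := by
    rw [pfZ]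
    push_cast
    rw [hcastσ, hcastσ, hcastσ, hsucc0, hsucc1, hsucc2]
  have hpfτ : ((pfZ t : ℤ) : ℝ) = SkewAdj τ 1 2 - SkewAdj τ 1 3 + SkewAdj τ 2 3 := by
    rw [pfZ]
    push_cast
    rw [hcastτ, hcastτ, hcastτ, hsucc0, hsucc1, hsucc2]
  rw [skew_det hσ hadj hσ0, skew_det hτ hadj hτ0, ← hpfσ, ← hpfτ] at hdet
  have hpf : pfZ s = pfZ t ∨ pfZ s = -pfZ t := by
    have : (pfZ s)^2 = (pfZ t)^2 := by exact_mod_cast hdet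
    exact sq_eq_sq_iff_eq_or_eq_neg.mp this
  -- support and antisymmetry facts
  have hsupp : ∀ a b : Fin 3, (s a b || s b a) = (t a b || t b a) := by
    intro a b
    have h1 := (hσ.1 a.succ b.succ)
    have h2 := (hτ.1 a.succ b.succ)
    show (σ a.succ b.succ || σ b.succ a.succ) = (τ a.succ b.succ || τ b.succ a.succ)
    rcases e1 : σ a.succ b.succ <;> rcases e2 : σ b.succ a.succ <;>
      rcases e3 : τ a.succ b.succ <;> rcases e4 : τ b.succ a.succ <;>
      simp_all
  have hantiσ : ∀ a b : Fin 3, s a b = true → s b a = false := fun a b h =>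
    hσ.2 _ _ h
  have hantiτ : ∀ a b : Fin 3, t a b = true → t b a = false := fun a b h =>
    hτ.2 _ _ h
  have hdiagσ : ∀ a : Fin 3, s a a = false := by
    intro a
    rcases h : s a a with _ | _
    · rfl
    · exact absurd (hantiσ a a h) (by simp [h])
  have hdiagτ : ∀ a : Fin 3, t a a = false := by
    intro a
    rcases h : t a a with _ | _
    · rfl
    · exact absurd (hantiτ a a h) (by simp [h])
  have hsmk : s = mk3 (s 0 1) (s 0 2) (s 1 2) (s 1 0) (s 2 0) (s 2 1) := by
    funext a b
    fin_cases a <;> fin_cases b <;> simp [mk3, hdiagσ]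
  have htmk : t = mk3 (t 0 1) (t 0 2) (t 1 2) (t 1 0) (t 2 0) (t 2 1) := by
    funext a b
    fin_cases a <;> fin_cases b <;> simp [mk3, hdiagτ]
  rw [hsmk] at hsupp hantiσ hpf
  rw [htmk] at hsupp hantiτ hpf
  have hkey := key _ _ _ _ _ _ _ _ _ _ _ _ hsupp hantiσ hantiτ hpf
  rw [← hsmk, ← htmk] at hkey
  exact hkey
end
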